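/- Calibration of the geometric logistic loss: assume the kernel matrix K = (exp(−c_{ij}/2))_{i,j} is positive definite. Let (X, Σ) be a measurable space and ρ a probability measure on X × △^d; for measurable g : X → ℝ^d set ℛ(g) = ∫ ℓ_Ω(α, g(x)) dρ(x,α), and for measurable β : X → △^d set ℰ(β) = ∫ D_Ω(α, β(x)) dρ(x,α), assuming these integrals exist. Then: (i) for every measurable β : X → △^d, ℛ(∇Ω ∘ β) = ℰ(β); (ii) for every measurable g : X → ℝ^d, ℰ(g-softmax ∘ g) ≤ ℛ(g); consequently the infimum of ℰ over measurable β equals the infimum of ℛ over measurable g, and for every measurable g, ℰ(g-softmax ∘ g) − inf_β ℰ(β) ≤ ℛ(g) − inf_{g'} ℛ(g'). -/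

import Mathlib

open Finset Real Filter

noncomputable section

/-- The probability simplex in `ℝ^d`. -/
def simplexS (d : ℕ) : Set (Fin d → ℝ) := stdSimplex ℝ (Fin d)

/-- Transport plans between `α` and `β`: nonnegative matrices with prescribed marginals,
supported where `α i * β j > 0`. -/
def couplings {d : ℕ} (α β : Fin d → ℝ) : Set (Matrix (Fin d) (Fin d) ℝ) :=
  {p | (∀ i j, 0 ≤ p i j) ∧ (∀ i, ∑ j, p i j = α i) ∧ (∀ j, ∑ i, p i j = β j) ∧
    ∀ i j, α i * β j = 0 → p i j = 0}

/-- The entropy-regularized transport cost of a plan `p` (with the convention `0 log 0 = 0`,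
which holds automatically since `Real.log 0 = 0`). -/
def OTcost {d : ℕ} (C : Matrix (Fin d) (Fin d) ℝ) (ε : ℝ) (α β : Fin d → ℝ)
    (p : Matrix (Fin d) (Fin d) ℝ) : ℝ :=
  (∑ i, ∑ j, p i j * C i j) + ε * ∑ i, ∑ j, p i j * Real.log (p i j / (α i * β j))

/-- Entropy-regularized optimal transport cost `OT_{C,ε}(α,β)`. -/
def OT {d : ℕ} (C : Matrix (Fin d) (Fin d) ℝ) (ε : ℝ) (α β : Fin d → ℝ) : ℝ :=
  sInf (OTcost C ε α β '' couplings α β)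

/-- The Sinkhorn negentropy `Ω_C(α) = -(1/2) OT_{C,2}(α,α)`. -/
def Omega {d : ℕ} (C : Matrix (Fin d) (Fin d) ℝ) (α : Fin d → ℝ) : ℝ :=
  -(1 / 2) * OT C 2 α α

open scoped Classical

/-- `Φ_C(α,f) = Σ_{i,j} α_i α_j exp(-(f_i + f_j + c_{ij})/2)`. -/
def Phi {d : ℕ} (C : Matrix (Fin d) (Fin d) ℝ) (α f : Fin d → ℝ) : ℝ :=
  ∑ i, ∑ j, α i * α j * Real.exp (-(f i + f j + C i j) / 2)

/-- The geometric log-sum-exp `Ω_C^*(f) = -log min_{α ∈ △^d} Φ_C(α, f)`. -/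
def OmegaStar {d : ℕ} (C : Matrix (Fin d) (Fin d) ℝ) (f : Fin d → ℝ) : ℝ :=
  -Real.log (sInf ((fun α => Phi C α f) '' simplexS d))

/-- The geometric softmax: the (unique, when the kernel is positive definite) minimizer of
`Φ_C(·, f)` over the simplex. -/
def gsoftmax {d : ℕ} (C : Matrix (Fin d) (Fin d) ℝ) (f : Fin d → ℝ) : Fin d → ℝ :=
  if h : ∃ α ∈ simplexS d, IsMinOn (fun β => Phi C β f) (simplexS d) α
  then h.choose else fun _ => 0

/-- The soft C-transform `T(f,α)_i = -2 log Σ_j α_j exp((f_j - c_{ij})/2)`. -/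
def Tsoft {d : ℕ} (C : Matrix (Fin d) (Fin d) ℝ) (f α : Fin d → ℝ) : Fin d → ℝ :=
  fun i => -2 * Real.log (∑ j, α j * Real.exp ((f j - C i j) / 2))

/-- `f` is the symmetric Sinkhorn potential of `α`: `-f = T(-f, α)`. -/
def IsSinkhornPotential {d : ℕ} (C : Matrix (Fin d) (Fin d) ℝ) (α f : Fin d → ℝ) : Prop :=
  -f = Tsoft C (-f) α

/-- The symmetric Sinkhorn potential `∇Ω(α)`: the (unique, when the kernel is positive
definite) `f` with `-f = T(-f, α)`. -/
def gradOmega {d : ℕ} (C : Matrix (Fin d) (Fin d) ℝ) (α : Fin d → ℝ) : Fin d → ℝ :=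
  if h : ∃ f : Fin d → ℝ, IsSinkhornPotential C α f then h.choose else fun _ => 0

/-- The extrapolation `f^E = -T(-(f - Ω_C^*(f)·1), g-softmax(f)) + Ω_C^*(f)·1`. -/
def extrap {d : ℕ} (C : Matrix (Fin d) (Fin d) ℝ) (f : Fin d → ℝ) : Fin d → ℝ :=
  fun i => -(Tsoft C (fun j => -(f j - OmegaStar C f)) (gsoftmax C f) i) + OmegaStar C f

/-- The kernel matrix `K = (exp(-c_{ij}/2))_{ij}`. -/
def kernelK {d : ℕ} (C : Matrix (Fin d) (Fin d) ℝ) : Matrix (Fin d) (Fin d) ℝ :=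
  Matrix.of fun i j => Real.exp (-(C i j) / 2)

/-- The Fenchel-Young loss `ℓ_Ω(α,f) = Ω_C^*(f) + Ω_C(α) - ⟨α, f⟩`. -/
def FYloss {d : ℕ} (C : Matrix (Fin d) (Fin d) ℝ) (α f : Fin d → ℝ) : ℝ :=
  OmegaStar C f + Omega C α - ∑ i, α i * f i

/-- The asymmetric Hausdorff (Bregman) divergence
`D_Ω(α,β) = Ω_C(α) - Ω_C(β) - ⟨∇Ω(β), α - β⟩`. -/
def DOmega {d : ℕ} (C : Matrix (Fin d) (Fin d) ℝ) (α β : Fin d → ℝ) : ℝ :=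
  Omega C α - Omega C β - ∑ i, gradOmega C β i * (α i - β i)

open MeasureTheory


namespace Calib

variable {d : ℕ} {C : Matrix (Fin d) (Fin d) ℝ}

lemma simplex_nonneg {α : Fin d → ℝ} (hα : α ∈ simplexS d) (i : Fin d) : 0 ≤ α i := hα.1 i

lemma simplex_sum {α : Fin d → ℝ} (hα : α ∈ simplexS d) : ∑ i, α i = 1 := hα.2

lemma simplex_exists_pos {α : Fin d → ℝ} (hα : α ∈ simplexS d) : ∃ i, 0 < α i := by
  by_contra h
  push_neg at h
  have : ∑ i, α i = 0 := Finset.sum_eq_zero fun i _ => le_antisymm (h i) (hα.1 i)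
  rw [simplex_sum hα] at this; norm_num at this

lemma K_pos (i j : Fin d) : 0 < kernelK C i j := Real.exp_pos _

lemma K_diag (hCdiag : ∀ i, C i i = 0) (i : Fin d) : kernelK C i i = 1 := by
  simp [kernelK, hCdiag i]

lemma K_symm (hCsym : C.IsSymm) (i j : Fin d) : kernelK C i j = kernelK C j i := by
  simp [kernelK, hCsym.apply i j]

/-- quadratic form of the kernel -/
def Qf (C : Matrix (Fin d) (Fin d) ℝ) (v : Fin d → ℝ) : ℝ :=
  ∑ i, ∑ j, v i * v j * kernelK C i j

/-- bilinear form of the kernel -/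
def Bf (C : Matrix (Fin d) (Fin d) ℝ) (u w : Fin d → ℝ) : ℝ :=
  ∑ i, ∑ j, u i * w j * kernelK C i j

lemma Bf_symm (hCsym : C.IsSymm) (u w : Fin d → ℝ) : Bf C u w = Bf C w u := by
  unfold Bf
  rw [Finset.sum_comm]
  exact Finset.sum_congr rfl fun i _ => Finset.sum_congr rfl fun j _ => by
    rw [K_symm hCsym]; ring

lemma Q_nonneg (hK : (kernelK C).PosDef) (v : Fin d → ℝ) : 0 ≤ Qf C v := by
  have h := hK.posSemidef.dotProduct_mulVec_nonneg v
  simp only [star_trivial, dotProduct, Matrix.mulVec, dotProduct] at h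
  unfold Qf
  calc (0:ℝ) ≤ ∑ i, v i * ∑ j, kernelK C i j * v j := h
  _ = ∑ i, ∑ j, v i * v j * kernelK C i j := by
      refine Finset.sum_congr rfl fun i _ => ?_
      rw [Finset.mul_sum]
      exact Finset.sum_congr rfl fun j _ => by ring

lemma Q_pos (hK : (kernelK C).PosDef) {v : Fin d → ℝ} (hv : v ≠ 0) : 0 < Qf C v := by
  have h := hK.dotProduct_mulVec_pos hv
  simp only [star_trivial, dotProduct, Matrix.mulVec, dotProduct] at h
  unfold Qf
  calc (0:ℝ) < ∑ i, v i * ∑ j, kernelK C i j * v j := h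
  _ = ∑ i, ∑ j, v i * v j * kernelK C i j := by
      refine Finset.sum_congr rfl fun i _ => ?_
      rw [Finset.mul_sum]
      exact Finset.sum_congr rfl fun j _ => by ring

lemma Q_combo (a b : ℝ) (x y : Fin d → ℝ) :
    Qf C (fun i => a * x i + b * y i)
      = a^2 * Qf C x + a*b* Bf C x y + a*b* Bf C y x + b^2 * Qf C y := by
  unfold Qf Bf
  simp only [Finset.mul_sum, ← Finset.sum_add_distrib]
  exact Finset.sum_congr rfl fun i _ => Finset.sum_congr rfl fun j _ => by ring

/-- Cauchy-Schwarz specialized: if `Qf u = 1` then `(Bf u w)^2 ≤ Qf w`. -/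
lemma sq_B_le (hCsym : C.IsSymm) (hK : (kernelK C).PosDef) {u w : Fin d → ℝ}
    (hu : Qf C u = 1) : (Bf C u w)^2 ≤ Qf C w := by
  rw [Bf_symm hCsym u w]
  have h := Q_nonneg hK (fun i => (Bf C w u) * u i + (-1) * w i)
  rw [Q_combo, hu, Bf_symm hCsym u w] at h
  nlinarith [h]


lemma sum_exp_pos {α : Fin d → ℝ} (hα : α ∈ simplexS d) (g : Fin d → ℝ) :
    0 < ∑ j, α j * g j → True := fun _ => trivial

lemma pot_sum_pos {α : Fin d → ℝ} (hα : α ∈ simplexS d) (h : Fin d → ℝ) :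
    0 < ∑ j, α j * Real.exp (h j) := by
  obtain ⟨k, hk⟩ := simplex_exists_pos hα
  refine Finset.sum_pos' (fun j _ => mul_nonneg (hα.1 j) (Real.exp_pos _).le)
    ⟨k, Finset.mem_univ k, mul_pos hk (Real.exp_pos _)⟩

lemma pot_iff {α f : Fin d → ℝ} (hα : α ∈ simplexS d) :
    IsSinkhornPotential C α f ↔
      ∀ i, Real.exp (f i / 2) = ∑ j, α j * Real.exp (-(f j + C i j) / 2) := by
  unfold IsSinkhornPotential Tsoft
  rw [funext_iff]
  refine forall_congr' fun i => ?_
  simp only [Pi.neg_apply]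
  have hrw : (∑ j, α j * Real.exp ((-f j - C i j) / 2))
      = ∑ j, α j * Real.exp (-(f j + C i j) / 2) :=
    Finset.sum_congr rfl fun j _ => by rw [show (-f j - C i j) / 2 = -(f j + C i j)/2 by ring]
  have hS : 0 < ∑ j, α j * Real.exp (-(f j + C i j) / 2) :=
    pot_sum_pos hα (fun j => -(f j + C i j) / 2)
  rw [hrw]
  constructor
  · intro h
    have hf2 : f i = 2 * Real.log (∑ j, α j * Real.exp (-(f j + C i j) / 2)) := by linarith
    rw [hf2]
    rw [show (2 : ℝ) * Real.log (∑ j, α j * Real.exp (-(f j + C i j) / 2)) / 2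
        = Real.log (∑ j, α j * Real.exp (-(f j + C i j) / 2)) by ring]
    exact Real.exp_log hS
  · intro h
    have hlog : Real.log (∑ j, α j * Real.exp (-(f j + C i j) / 2)) = f i / 2 := by
      rw [← h, Real.log_exp]
    rw [hlog]; ring

/-- the key reproducing identity for a potential. -/
lemma pot_Ku {α f : Fin d → ℝ} (hα : α ∈ simplexS d) (hf : IsSinkhornPotential C α f)
    (i : Fin d) :
    ∑ j, α j * Real.exp (-f j / 2) * kernelK C i j = Real.exp (f i / 2) := by
  rw [(pot_iff hα).1 hf i]
  refine Finset.sum_congr rfl fun j _ => ?_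
  rw [kernelK]
  show α j * Real.exp (-f j / 2) * Real.exp (-C i j / 2) = _
  rw [mul_assoc, ← Real.exp_add]
  congr 2
  ring

lemma Phi_eq_Q (β f : Fin d → ℝ) :
    Phi C β f = Qf C (fun i => β i * Real.exp (-f i / 2)) := by
  unfold Phi Qf
  refine Finset.sum_congr rfl fun i _ => Finset.sum_congr rfl fun j _ => ?_
  rw [kernelK]
  show β i * β j * Real.exp (-(f i + f j + C i j) / 2)
      = β i * Real.exp (-f i / 2) * (β j * Real.exp (-f j / 2)) * Real.exp (-C i j / 2)
  rw [show β i * Real.exp (-f i / 2) * (β j * Real.exp (-f j / 2)) * Real.exp (-C i j / 2)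
      = β i * β j * (Real.exp (-f i / 2) * Real.exp (-f j / 2) * Real.exp (-C i j / 2)) by ring,
    ← Real.exp_add, ← Real.exp_add]
  congr 2
  ring

lemma pot_Phi_self {α f : Fin d → ℝ} (hα : α ∈ simplexS d)
    (hf : IsSinkhornPotential C α f) : Phi C α f = 1 := by
  rw [Phi_eq_Q]
  unfold Qf
  have : ∀ i, ∑ j, (α i * Real.exp (-f i / 2)) * (α j * Real.exp (-f j / 2)) * kernelK C i j
      = α i := by
    intro i
    have : ∑ j, (α i * Real.exp (-f i / 2)) * (α j * Real.exp (-f j / 2)) * kernelK C i j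
        = (α i * Real.exp (-f i / 2)) * ∑ j, α j * Real.exp (-f j / 2) * kernelK C i j := by
      rw [Finset.mul_sum]
      exact Finset.sum_congr rfl fun j _ => by ring
    rw [this, pot_Ku hα hf i, mul_assoc, ← Real.exp_add,
      show -f i / 2 + f i / 2 = 0 by ring, Real.exp_zero, mul_one]
  calc ∑ i, ∑ j, (α i * Real.exp (-f i / 2)) * (α j * Real.exp (-f j / 2)) * kernelK C i j
      = ∑ i, α i := Finset.sum_congr rfl fun i _ => this i
  _ = 1 := simplex_sum hα

lemma pot_Phi_ge (hCsym : C.IsSymm) (hK : (kernelK C).PosDef)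
    {α f : Fin d → ℝ} (hα : α ∈ simplexS d) (hf : IsSinkhornPotential C α f)
    {β : Fin d → ℝ} (hβ : β ∈ simplexS d) : 1 ≤ Phi C β f := by
  set u : Fin d → ℝ := fun i => α i * Real.exp (-f i / 2) with hu
  set w : Fin d → ℝ := fun i => β i * Real.exp (-f i / 2) with hw
  have hQu : Qf C u = 1 := by rw [← Phi_eq_Q]; exact pot_Phi_self hα hf
  have hBwu : Bf C w u = 1 := by
    unfold Bf
    have : ∀ i, ∑ j, w i * u j * kernelK C i j = β i := by
      intro i
      have : ∑ j, w i * u j * kernelK C i j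
          = w i * ∑ j, α j * Real.exp (-f j / 2) * kernelK C i j := by
        rw [Finset.mul_sum]
        exact Finset.sum_congr rfl fun j _ => by rw [hu]; ring
      rw [this, pot_Ku hα hf i, hw]
      show β i * Real.exp (-f i / 2) * Real.exp (f i / 2) = β i
      rw [mul_assoc, ← Real.exp_add, show -f i / 2 + f i / 2 = 0 by ring,
        Real.exp_zero, mul_one]
    calc ∑ i, ∑ j, w i * u j * kernelK C i j = ∑ i, β i :=
          Finset.sum_congr rfl fun i _ => this i
    _ = 1 := simplex_sum hβ
  have hcs := sq_B_le hCsym hK (w := w) hQu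
  rw [Bf_symm hCsym u w, hBwu] at hcs
  rw [Phi_eq_Q]
  calc (1:ℝ) = 1^2 := by norm_num
  _ ≤ Qf C w := hcs

lemma pot_OmegaStar (hCsym : C.IsSymm) (hK : (kernelK C).PosDef)
    {α f : Fin d → ℝ} (hα : α ∈ simplexS d) (hf : IsSinkhornPotential C α f) :
    OmegaStar C f = 0 := by
  unfold OmegaStar
  have hleast : IsLeast ((fun β => Phi C β f) '' simplexS d) 1 := by
    constructor
    · exact ⟨α, hα, pot_Phi_self hα hf⟩
    · rintro y ⟨β, hβ, rfl⟩
      exact pot_Phi_ge hCsym hK hα hf hβ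
  rw [hleast.csInf_eq, Real.log_one, neg_zero]


section OmegaComp

variable {α f : Fin d → ℝ}

/-- optimal plan for the symmetric problem -/
private def piPlan (C : Matrix (Fin d) (Fin d) ℝ) (α f : Fin d → ℝ) :
    Matrix (Fin d) (Fin d) ℝ :=
  fun i j => α i * α j * Real.exp (-(f i + f j + C i j) / 2)

lemma piPlan_split (i j : Fin d) :
    piPlan C α f i j
      = (α i * Real.exp (-f i / 2)) * (α j * Real.exp (-f j / 2) * kernelK C i j) := by
  unfold piPlan kernelK
  show α i * α j * Real.exp (-(f i + f j + C i j) / 2)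
      = α i * Real.exp (-f i / 2) * (α j * Real.exp (-f j / 2) * Real.exp (-C i j / 2))
  rw [show α i * Real.exp (-f i / 2) * (α j * Real.exp (-f j / 2) * Real.exp (-C i j / 2))
      = α i * α j * (Real.exp (-f i / 2) * Real.exp (-f j / 2) * Real.exp (-C i j / 2)) by ring,
    ← Real.exp_add, ← Real.exp_add]
  congr 2
  ring

lemma piPlan_nonneg (i j : Fin d) (hα : α ∈ simplexS d) : 0 ≤ piPlan C α f i j :=
  mul_nonneg (mul_nonneg (hα.1 i) (hα.1 j)) (Real.exp_pos _).le

lemma piPlan_symm (hCsym : C.IsSymm) (i j : Fin d) :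
    piPlan C α f i j = piPlan C α f j i := by
  unfold piPlan
  rw [show C i j = C j i from (hCsym.apply i j).symm]
  ring_nf

lemma piPlan_row (hα : α ∈ simplexS d) (hf : IsSinkhornPotential C α f) (i : Fin d) :
    ∑ j, piPlan C α f i j = α i := by
  have h1 : ∑ j, piPlan C α f i j
      = (α i * Real.exp (-f i / 2)) * ∑ j, α j * Real.exp (-f j / 2) * kernelK C i j := by
    rw [Finset.mul_sum]
    exact Finset.sum_congr rfl fun j _ => piPlan_split i j
  rw [h1, pot_Ku hα hf i, mul_assoc, ← Real.exp_add,
    show -f i / 2 + f i / 2 = 0 by ring, Real.exp_zero, mul_one]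

lemma piPlan_col (hCsym : C.IsSymm) (hα : α ∈ simplexS d)
    (hf : IsSinkhornPotential C α f) (j : Fin d) :
    ∑ i, piPlan C α f i j = α j := by
  rw [Finset.sum_congr rfl fun i _ => piPlan_symm hCsym i j]
  exact piPlan_row hα hf j

lemma piPlan_mem (hCsym : C.IsSymm) (hα : α ∈ simplexS d)
    (hf : IsSinkhornPotential C α f) : piPlan C α f ∈ couplings α α := by
  refine ⟨fun i j => piPlan_nonneg i j hα, piPlan_row hα hf, piPlan_col hCsym hα hf, ?_⟩
  intro i j hz
  unfold piPlan
  rw [hz, zero_mul]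

lemma marg_sum {p : Matrix (Fin d) (Fin d) ℝ} (hr : ∀ i, ∑ j, p i j = α i)
    (hc : ∀ j, ∑ i, p i j = α j) :
    ∑ i, ∑ j, p i j * (f i + f j) = 2 * ∑ i, α i * f i := by
  have h1 : ∑ i, ∑ j, p i j * f i = ∑ i, α i * f i := by
    refine Finset.sum_congr rfl fun i _ => ?_
    rw [← Finset.sum_mul, hr i]
  have h2 : ∑ i, ∑ j, p i j * f j = ∑ i, α i * f i := by
    rw [Finset.sum_comm]
    refine Finset.sum_congr rfl fun j _ => ?_
    rw [← Finset.sum_mul, hc j]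
  calc ∑ i, ∑ j, p i j * (f i + f j)
      = ∑ i, ∑ j, (p i j * f i + p i j * f j) := by
        exact Finset.sum_congr rfl fun i _ => Finset.sum_congr rfl fun j _ => by ring
  _ = (∑ i, ∑ j, p i j * f i) + ∑ i, ∑ j, p i j * f j := by
        rw [← Finset.sum_add_distrib]
        exact Finset.sum_congr rfl fun i _ => by rw [← Finset.sum_add_distrib]
  _ = 2 * ∑ i, α i * f i := by rw [h1, h2]; ring

lemma OTcost_expand (p : Matrix (Fin d) (Fin d) ℝ) :
    OTcost C 2 α α p
      = ∑ i, ∑ j, (p i j * C i j + 2 * (p i j * Real.log (p i j / (α i * α j)))) := by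
  unfold OTcost
  rw [Finset.mul_sum, ← Finset.sum_add_distrib]
  refine Finset.sum_congr rfl fun i _ => ?_
  rw [Finset.mul_sum, ← Finset.sum_add_distrib]

lemma piPlan_cost (hCsym : C.IsSymm) (hα : α ∈ simplexS d)
    (hf : IsSinkhornPotential C α f) :
    OTcost C 2 α α (piPlan C α f) = -2 * ∑ i, α i * f i := by
  rw [OTcost_expand]
  have hterm : ∀ i j, piPlan C α f i j * C i j
      + 2 * (piPlan C α f i j * Real.log (piPlan C α f i j / (α i * α j)))
      = -(piPlan C α f i j * (f i + f j)) := by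
    intro i j
    by_cases hz : α i * α j = 0
    · have : piPlan C α f i j = 0 := by unfold piPlan; rw [hz, zero_mul]
      rw [this]; ring
    · have hdiv : piPlan C α f i j / (α i * α j) = Real.exp (-(f i + f j + C i j) / 2) := by
        unfold piPlan
        rw [mul_comm (α i) (α j)] at hz ⊢
        exact mul_div_cancel_left₀ _ hz
      rw [hdiv, Real.log_exp]
      ring
  rw [Finset.sum_congr rfl fun i _ => Finset.sum_congr rfl fun j _ => hterm i j]
  have : ∑ i, ∑ j, -(piPlan C α f i j * (f i + f j))
      = -∑ i, ∑ j, piPlan C α f i j * (f i + f j) := by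
    rw [← Finset.sum_neg_distrib]
    exact Finset.sum_congr rfl fun i _ => by rw [← Finset.sum_neg_distrib]
  rw [this, marg_sum (piPlan_row hα hf) (piPlan_col hCsym hα hf)]
  ring


lemma OTcost_lb (hCsym : C.IsSymm) (hα : α ∈ simplexS d)
    (hf : IsSinkhornPotential C α f) {p : Matrix (Fin d) (Fin d) ℝ}
    (hp : p ∈ couplings α α) :
    -2 * ∑ i, α i * f i ≤ OTcost C 2 α α p := by
  obtain ⟨hp0, hpr, hpc, hps⟩ := hp
  -- positivity of piPlan where relevant
  have hππ : ∀ i j, α i * α j ≠ 0 → 0 < piPlan C α f i j := by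
    intro i j hz
    have h1 : 0 < α i * α j :=
      lt_of_le_of_ne (mul_nonneg (hα.1 i) (hα.1 j)) (Ne.symm hz)
    exact mul_pos h1 (Real.exp_pos _)
  have hterm : ∀ i j,
      p i j * C i j + 2 * (p i j * Real.log (p i j / (α i * α j))) + p i j * (f i + f j)
        = 2 * (p i j * Real.log (p i j / piPlan C α f i j)) := by
    intro i j
    by_cases hz : p i j = 0
    · rw [hz]; ring
    · have hαα : α i * α j ≠ 0 := fun h => hz (hps i j h)
      have hααpos : 0 < α i * α j :=
        lt_of_le_of_ne (mul_nonneg (hα.1 i) (hα.1 j)) (Ne.symm hαα)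
      have hppos : 0 < p i j := lt_of_le_of_ne (hp0 i j) (Ne.symm hz)
      have hπpos := hππ i j hαα
      rw [Real.log_div hz (ne_of_gt hπpos), Real.log_div hz (ne_of_gt hααpos)]
      have hlogπ : Real.log (piPlan C α f i j)
          = Real.log (α i * α j) + (-(f i + f j + C i j) / 2) := by
        unfold piPlan
        rw [Real.log_mul hαα (ne_of_gt (Real.exp_pos _)), Real.log_exp]
      rw [hlogπ]
      ring
  have hineq : ∀ i j, p i j - piPlan C α f i j
      ≤ p i j * Real.log (p i j / piPlan C α f i j) := by
    intro i j
    by_cases hz : p i j = 0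
    · rw [hz]
      simp only [zero_sub, zero_mul]
      linarith [piPlan_nonneg (C := C) (α := α) (f := f) i j hα]
    · have hαα : α i * α j ≠ 0 := fun h => hz (hps i j h)
      have hppos : 0 < p i j := lt_of_le_of_ne (hp0 i j) (Ne.symm hz)
      have hπpos := hππ i j hαα
      have hlog := Real.log_le_sub_one_of_pos (div_pos hπpos hppos)
      have hinv : Real.log (piPlan C α f i j / p i j)
          = -Real.log (p i j / piPlan C α f i j) := by
        rw [Real.log_div (ne_of_gt hπpos) hz, Real.log_div hz (ne_of_gt hπpos)]
        ring
      rw [hinv] at hlog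
      have h4 := mul_le_mul_of_nonneg_left hlog (le_of_lt hppos)
      have h5 : p i j * (piPlan C α f i j / p i j - 1) = piPlan C α f i j - p i j := by
        field_simp
      rw [h5] at h4
      nlinarith [h4]
  -- sums
  have hpsum : ∑ i, ∑ j, p i j = 1 := by
    rw [Finset.sum_congr rfl fun i (_ : i ∈ Finset.univ) => hpr i]
    exact simplex_sum hα
  have hπsum : ∑ i, ∑ j, piPlan C α f i j = 1 := by
    rw [Finset.sum_congr rfl fun i (_ : i ∈ Finset.univ) => piPlan_row hα hf i]
    exact simplex_sum hα
  have key : OTcost C 2 α α p + 2 * ∑ i, α i * f i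
      = ∑ i, ∑ j, 2 * (p i j * Real.log (p i j / piPlan C α f i j)) := by
    rw [OTcost_expand, ← marg_sum (f := f) hpr hpc]
    rw [← Finset.sum_add_distrib]
    refine Finset.sum_congr rfl fun i _ => ?_
    rw [← Finset.sum_add_distrib]
    exact Finset.sum_congr rfl fun j _ => hterm i j
  have hge : (0:ℝ) ≤ ∑ i, ∑ j, 2 * (p i j * Real.log (p i j / piPlan C α f i j)) := by
    have h2 : ∑ i, ∑ j, (2 * (p i j - piPlan C α f i j))
        ≤ ∑ i, ∑ j, 2 * (p i j * Real.log (p i j / piPlan C α f i j)) := by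
      refine Finset.sum_le_sum fun i _ => Finset.sum_le_sum fun j _ => ?_
      linarith [hineq i j]
    have hsub : ∑ i, ∑ j, (p i j - piPlan C α f i j) = 0 := by
      simp only [Finset.sum_sub_distrib]
      rw [hpsum, hπsum, sub_self]
    have h3 : ∑ i, ∑ j, (2 * (p i j - piPlan C α f i j)) = 0 := by
      calc ∑ i, ∑ j, (2 * (p i j - piPlan C α f i j))
          = 2 * ∑ i, ∑ j, (p i j - piPlan C α f i j) := by
            simp only [Finset.mul_sum]
      _ = 0 := by rw [hsub]; ring
    linarith
  linarith [key, hge]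

lemma pot_Omega (hCsym : C.IsSymm) (hα : α ∈ simplexS d)
    (hf : IsSinkhornPotential C α f) :
    Omega C α = ∑ i, α i * f i := by
  unfold Omega OT
  have hleast : IsLeast (OTcost C 2 α α '' couplings α α) (-2 * ∑ i, α i * f i) := by
    constructor
    · exact ⟨piPlan C α f, piPlan_mem hCsym hα hf, piPlan_cost hCsym hα hf⟩
    · rintro y ⟨p, hp, rfl⟩
      exact OTcost_lb hCsym hα hf hp
  rw [hleast.csInf_eq]
  ring

end OmegaComp


lemma simplex_le_one {α : Fin d → ℝ} (hα : α ∈ simplexS d) (i : Fin d) : α i ≤ 1 := by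
  rw [← simplex_sum hα]
  exact Finset.single_le_sum (fun j _ => hα.1 j) (Finset.mem_univ i)

section Existence

variable {α : Fin d → ℝ}

/-- The dual objective whose minimizers give symmetric Sinkhorn potentials. -/
private def Fobj (C : Matrix (Fin d) (Fin d) ℝ) (α : Fin d → ℝ) (t : Fin d → ℝ) : ℝ :=
  (1/2) * (∑ i, ∑ j, (α i * Real.exp (t i)) * (α j * Real.exp (t j)) * kernelK C i j)
    - ∑ i, α i * t i

private lemma Fobj_cont : Continuous (Fobj C α) := by
  unfold Fobj
  refine Continuous.sub (continuous_const.mul ?_) ?_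
  · refine continuous_finset_sum _ fun i _ => continuous_finset_sum _ fun j _ => ?_
    exact ((continuous_const.mul ((continuous_apply i).rexp)).mul
      (continuous_const.mul ((continuous_apply j).rexp))).mul continuous_const
  · exact continuous_finset_sum _ fun i _ => continuous_const.mul (continuous_apply i)

private lemma Fobj_lower (hCdiag : ∀ i, C i i = 0) (hα : α ∈ simplexS d) (t : Fin d → ℝ) :
    ∑ i, ((1/2) * (α i * Real.exp (t i))^2 - α i * t i) ≤ Fobj C α t := by
  have hq : ∀ i : Fin d, (α i * Real.exp (t i))^2
      ≤ ∑ j, (α i * Real.exp (t i)) * (α j * Real.exp (t j)) * kernelK C i j := by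
    intro i
    have h := Finset.single_le_sum
      (f := fun j => (α i * Real.exp (t i)) * (α j * Real.exp (t j)) * kernelK C i j)
      (fun j _ => mul_nonneg (mul_nonneg
        (mul_nonneg (hα.1 i) (Real.exp_pos _).le)
        (mul_nonneg (hα.1 j) (Real.exp_pos _).le)) ((K_pos i j).le)) (Finset.mem_univ i)
    calc (α i * Real.exp (t i))^2
        = (α i * Real.exp (t i)) * (α i * Real.exp (t i)) * kernelK C i i := by
          rw [K_diag hCdiag]; ring
    _ ≤ _ := h
  have e1 : ∑ i, ((1/2) * (α i * Real.exp (t i))^2 - α i * t i)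
      = (1/2) * (∑ i, (α i * Real.exp (t i))^2) - ∑ i, α i * t i := by
    rw [Finset.sum_sub_distrib]
    congr 1
    rw [Finset.mul_sum]
  have e2 : ∑ i, (α i * Real.exp (t i))^2
      ≤ ∑ i, ∑ j, (α i * Real.exp (t i)) * (α j * Real.exp (t j)) * kernelK C i j :=
    Finset.sum_le_sum fun i _ => hq i
  unfold Fobj
  rw [e1]
  have := mul_le_mul_of_nonneg_left e2 (by norm_num : (0:ℝ) ≤ 1/2)
  linarith

private lemma gterm_lb {b s : ℝ} (hb0 : 0 ≤ b) (hb1 : b ≤ 1) :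
    -(1/2) ≤ (1/2) * (b * Real.exp s)^2 - b * s := by
  rcases le_or_gt s 0 with hs | hs
  · have h1 : b * s ≤ 0 := mul_nonpos_of_nonneg_of_nonpos hb0 hs
    nlinarith [sq_nonneg (b * Real.exp s)]
  · have hes : s ≤ Real.exp s := by linarith [Real.add_one_le_exp s]
    have h1 : b * s ≤ b * Real.exp s := mul_le_mul_of_nonneg_left hes hb0
    have h2 : (b * s)^2 ≤ (b * Real.exp s)^2 := by
      have hbs : 0 ≤ b * s := mul_nonneg hb0 hs.le
      nlinarith [mul_nonneg hb0 (Real.exp_pos s).le]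
    nlinarith [sq_nonneg (b * s - 1)]

private lemma gterm_pos {a b s R : ℝ} (ha : 0 < a) (hab : a ≤ b) (hb1 : b ≤ 1)
    (hR : 4 / (a*a) ≤ R) (hs : R ≤ s) :
    R ≤ (1/2) * (b * Real.exp s)^2 - b * s := by
  have haa : 0 < a * a := mul_pos ha ha
  have hR4 : 4 ≤ a * a * R := by
    rw [div_le_iff₀ haa] at hR
    linarith
  have hs0 : 0 < s := by
    have : 0 < 4 / (a*a) := by positivity
    linarith
  have hes : s ≤ Real.exp s := by linarith [Real.add_one_le_exp s]
  have hbe : a * s ≤ b * Real.exp s :=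
    mul_le_mul hab hes hs0.le (le_trans ha.le hab)
  have hsq : (a * s)^2 ≤ (b * Real.exp s)^2 := by
    nlinarith [mul_nonneg ha.le hs0.le]
  have hbs : b * s ≤ s := by nlinarith
  have h4s : 4 * s ≤ a * a * R * s := mul_le_mul_of_nonneg_right hR4 hs0.le
  have hRs : a * a * R * s ≤ a * a * s * s := by
    have := mul_le_mul_of_nonneg_right hs (by positivity : (0:ℝ) ≤ a * a * s)
    nlinarith
  nlinarith [hsq]

private lemma gterm_neg {a b s R : ℝ} (ha : 0 < a) (hab : a ≤ b) (hR : 0 ≤ R)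
    (hs : s ≤ -R) :
    a * R ≤ (1/2) * (b * Real.exp s)^2 - b * s := by
  have h1 : a * R ≤ b * (-s) := by
    have := mul_le_mul hab (by linarith : R ≤ -s) hR (by linarith : (0:ℝ) ≤ b)
    linarith
  nlinarith [sq_nonneg (b * Real.exp s)]


/-- first-order condition at an unconstrained minimum of `Fobj`. -/
private lemma Fobj_foc (hCsym : C.IsSymm) {t0 : Fin d → ℝ}
    (hmin : ∀ t, Fobj C α t0 ≤ Fobj C α t) {i : Fin d} (hi : 0 < α i) :
    Real.exp (t0 i) * (∑ j, α j * Real.exp (t0 j) * kernelK C i j) = 1 := by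
  classical
  set c : Fin d → ℝ := fun j => α j * Real.exp (t0 j) with hc
  -- the one-dimensional slice
  set ψ : ℝ → ℝ := fun s =>
    (1/2) * (∑ k, ∑ j, (α k * Real.exp (t0 k + (if k = i then s else 0)))
        * (α j * Real.exp (t0 j + (if j = i then s else 0))) * kernelK C k j)
      - ∑ k, α k * (t0 k + (if k = i then s else 0)) with hψ
  have hψF : ∀ s, ψ s = Fobj C α (Function.update t0 i (t0 i + s)) := by
    intro s
    have hup : ∀ j : Fin d, Function.update t0 i (t0 i + s) j
        = t0 j + (if j = i then s else 0) := by
      intro j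
      rw [Function.update_apply]
      by_cases h : j = i
      · subst h; simp
      · simp [h]
    rw [hψ]
    unfold Fobj
    simp only [hup]
  have hψmin : ∀ s, ψ 0 ≤ ψ s := by
    intro s
    rw [hψF s, hψF 0]
    have : Function.update t0 i (t0 i + 0) = t0 := by
      rw [add_zero]; exact Function.update_eq_self i t0
    rw [this]
    exact hmin _
  have hloc : IsLocalMin ψ 0 := Filter.Eventually.of_forall hψmin
  -- derivative of ψ at 0
  have hvd : ∀ k : Fin d, HasDerivAt (fun s => α k * Real.exp (t0 k + (if k = i then s else 0)))
      (c k * (if k = i then 1 else 0)) 0 := by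
    intro k
    by_cases h : k = i
    · subst h
      simp only [if_pos rfl]
      have h1 : HasDerivAt (fun s : ℝ => t0 k + s) 1 0 := (hasDerivAt_id 0).const_add (t0 k)
      have h2 := (h1.exp).const_mul (α k)
      simpa [hc] using h2
    · simp only [if_neg h]
      have : (fun _ : ℝ => α k * Real.exp (t0 k + 0)) = fun _ => α k * Real.exp (t0 k + 0) := rfl
      simpa [hc] using (hasDerivAt_const (0:ℝ) (α k * Real.exp (t0 k + 0)))
  have hterm : ∀ k j : Fin d, HasDerivAt
      (fun s => (α k * Real.exp (t0 k + (if k = i then s else 0)))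
        * (α j * Real.exp (t0 j + (if j = i then s else 0))) * kernelK C k j)
      (((c k * (if k = i then 1 else 0)) * c j + c k * (c j * (if j = i then 1 else 0)))
        * kernelK C k j) 0 := by
    intro k j
    have h := ((hvd k).mul (hvd j)).mul_const (kernelK C k j)
    have hval : ∀ k : Fin d, α k * Real.exp (t0 k + (if k = i then (0:ℝ) else 0)) = c k := by
      intro k; rw [hc]; simp
    simpa [hval] using h
  have hquad : HasDerivAt (fun s => ∑ k, ∑ j,
      (α k * Real.exp (t0 k + (if k = i then s else 0)))
        * (α j * Real.exp (t0 j + (if j = i then s else 0))) * kernelK C k j)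
      (∑ k, ∑ j, ((c k * (if k = i then 1 else 0)) * c j
        + c k * (c j * (if j = i then 1 else 0))) * kernelK C k j) 0 := by
    refine HasDerivAt.fun_sum fun k _ => HasDerivAt.fun_sum fun j _ => hterm k j
  have hlin : HasDerivAt (fun s => ∑ k, α k * (t0 k + (if k = i then s else 0)))
      (∑ k, α k * (if k = i then 1 else 0)) 0 := by
    refine HasDerivAt.fun_sum fun k _ => ?_
    by_cases h : k = i
    · subst h
      simp only [if_pos rfl]
      exact ((hasDerivAt_id 0).const_add (t0 k)).const_mul (α k)
    · simp only [if_neg h]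
      simpa using (hasDerivAt_const (0:ℝ) (α k * (t0 k + 0)))
  have hψd : HasDerivAt ψ
      ((1/2) * (∑ k, ∑ j, ((c k * (if k = i then 1 else 0)) * c j
        + c k * (c j * (if j = i then 1 else 0))) * kernelK C k j)
        - ∑ k, α k * (if k = i then 1 else 0)) 0 := by
    rw [hψ]
    exact (hquad.const_mul (1/2)).sub hlin
  have hzero := hloc.hasDerivAt_eq_zero hψd
  -- simplify the sums
  have hs1 : ∑ k, ∑ j, ((c k * (if k = i then 1 else 0)) * c j
      + c k * (c j * (if j = i then 1 else 0))) * kernelK C k j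
      = 2 * (c i * ∑ j, c j * kernelK C i j) := by
    have e1 : ∀ k j : Fin d, ((c k * (if k = i then 1 else 0)) * c j
        + c k * (c j * (if j = i then 1 else 0))) * kernelK C k j
        = (if k = i then c k * c j * kernelK C k j else 0)
          + (if j = i then c k * c j * kernelK C k j else 0) := by
      intro k j
      by_cases h1 : k = i <;> by_cases h2 : j = i <;> simp [h1, h2] <;> ring
    rw [Finset.sum_congr rfl fun k _ => Finset.sum_congr rfl fun j _ => e1 k j]
    rw [Finset.sum_congr rfl fun k (_ : k ∈ Finset.univ) => Finset.sum_add_distrib]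
    rw [Finset.sum_add_distrib]
    have e2 : ∑ k, ∑ j, (if k = i then c k * c j * kernelK C k j else 0)
        = ∑ j, c i * c j * kernelK C i j := by
      rw [Finset.sum_comm]
      refine Finset.sum_congr rfl fun j _ => ?_
      rw [Finset.sum_ite_eq' Finset.univ i (fun k => c k * c j * kernelK C k j)]
      simp
    have e3 : ∑ k, ∑ j, (if j = i then c k * c j * kernelK C k j else 0)
        = ∑ k, c k * c i * kernelK C k i := by
      refine Finset.sum_congr rfl fun k _ => ?_
      rw [Finset.sum_ite_eq' Finset.univ i (fun j => c k * c j * kernelK C k j)]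
      simp
    have e4 : ∑ k, c k * c i * kernelK C k i = ∑ j, c i * c j * kernelK C i j := by
      refine Finset.sum_congr rfl fun k _ => ?_
      rw [K_symm hCsym k i]
      ring
    rw [e2, e3, e4]
    have h5 : c i * ∑ j, c j * kernelK C i j = ∑ j, c i * (c j * kernelK C i j) :=
      Finset.mul_sum _ _ _
    have h6 : ∑ j, c i * c j * kernelK C i j = ∑ j, c i * (c j * kernelK C i j) :=
      Finset.sum_congr rfl fun j _ => by ring
    rw [h5, h6]
    ring
  have hs2 : ∑ k, α k * (if k = i then (1:ℝ) else 0) = α i := by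
    have : ∀ k, α k * (if k = i then (1:ℝ) else 0) = if k = i then α k else 0 := by
      intro k; by_cases h : k = i <;> simp [h]
    rw [Finset.sum_congr rfl fun k _ => this k,
      Finset.sum_ite_eq' Finset.univ i (fun k => α k)]
    simp
  rw [hs1, hs2] at hzero
  have hci : c i * ∑ j, c j * kernelK C i j = α i := by linarith
  simp only [hc] at hci
  have key : α i * (Real.exp (t0 i) * (∑ j, α j * Real.exp (t0 j) * kernelK C i j))
      = α i * 1 := by
    rw [mul_one, ← mul_assoc]
    exact hci
  exact mul_left_cancel₀ (ne_of_gt hi) key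

/-- Existence of a symmetric Sinkhorn potential. -/
lemma exists_pot (hCsym : C.IsSymm) (hCdiag : ∀ i, C i i = 0) (hα : α ∈ simplexS d) :
    ∃ f, IsSinkhornPotential C α f := by
  classical
  obtain ⟨k0, hk0⟩ := simplex_exists_pos hα
  obtain ⟨a, hapos, hale, ha1⟩ : ∃ a : ℝ, 0 < a ∧ (∀ i, 0 < α i → a ≤ α i) ∧ a ≤ 1 := by
    refine ⟨(Finset.univ.filter (fun i => 0 < α i)).inf'
      ⟨k0, by simp [hk0]⟩ α, ?_, ?_, ?_⟩
    · refine (Finset.lt_inf'_iff _).2 ?_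
      intro i hi
      exact (Finset.mem_filter.1 hi).2
    · exact fun i hi => Finset.inf'_le α (Finset.mem_filter.2 ⟨Finset.mem_univ i, hi⟩)
    · exact le_trans (Finset.inf'_le α (Finset.mem_filter.2 ⟨Finset.mem_univ k0, hk0⟩))
        (simplex_le_one hα k0)
  obtain ⟨M, hM0, hMF⟩ : ∃ M : ℝ, 0 < M ∧ Fobj C α 0 + (d : ℝ) / 2 + 2 ≤ M := by
    refine ⟨max (Fobj C α 0) 0 + d / 2 + 2, ?_, ?_⟩
    · have := le_max_right (Fobj C α 0) 0
      positivity
    · have := le_max_left (Fobj C α 0) 0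
      linarith
  obtain ⟨R, hR0, hRa, hRaa⟩ :
      ∃ R : ℝ, 0 < R ∧ (M + 1) / a ≤ R ∧ 4 / (a * a) ≤ R := by
    refine ⟨max ((M + 1) / a) (4 / (a * a)), ?_, le_max_left _ _, le_max_right _ _⟩
    exact lt_of_lt_of_le (by positivity) (le_max_left _ _)
  set box : Set (Fin d → ℝ) := Set.pi Set.univ (fun _ => Set.Icc (-R) R) with hbox
  set V : Set (Fin d → ℝ) := {t | ∀ i, α i = 0 → t i = 0} with hV
  have hVclosed : IsClosed V := by
    have : V = ⋂ i, {t : Fin d → ℝ | α i = 0 → t i = 0} := by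
      ext t; simp [hV, Set.mem_iInter]
    rw [this]
    refine isClosed_iInter fun i => ?_
    by_cases hai : α i = 0
    · have : {t : Fin d → ℝ | α i = 0 → t i = 0} = {t : Fin d → ℝ | t i = 0} := by
        ext t; simp [hai]
      rw [this]
      exact isClosed_eq (continuous_apply i) continuous_const
    · have : {t : Fin d → ℝ | α i = 0 → t i = 0} = Set.univ := by
        ext t; simp [hai]
      rw [this]
      exact isClosed_univ
  have hboxcompact : IsCompact box := isCompact_univ_pi fun _ => isCompact_Icc
  have hcomp : IsCompact (V ∩ box) := hboxcompact.inter_left hVclosed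
  have h0mem : (0 : Fin d → ℝ) ∈ V ∩ box := by
    constructor
    · intro i _; rfl
    · intro i _
      exact Set.mem_Icc.2 ⟨by simp; linarith, by simp; linarith⟩
  obtain ⟨t0, ht0mem, ht0min⟩ := hcomp.exists_isMinOn ⟨0, h0mem⟩ (Fobj_cont (C := C) (α := α)).continuousOn
  -- outside the box (within V), Fobj is large
  have hbig : ∀ t ∈ V, t ∉ box → Fobj C α 0 < Fobj C α t := by
    intro t htV htb
    have : ∃ i, t i ∉ Set.Icc (-R) R := by
      by_contra h
      push_neg at h
      exact htb fun i _ => h i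
    obtain ⟨i, hti⟩ := this
    have hαi : 0 < α i := by
      rcases (hα.1 i).lt_or_eq with h | h
      · exact h
      · exfalso
        apply hti
        rw [htV i h.symm]
        exact Set.mem_Icc.2 ⟨by linarith, by linarith⟩
    have hbigterm : M + 1 ≤ (1/2) * (α i * Real.exp (t i))^2 - α i * t i := by
      rw [Set.mem_Icc] at hti
      push_neg at hti
      rcases le_or_gt (t i) R with h1 | h1
      · -- t i < -R
        have h2 : t i < -R := by
          rcases lt_or_ge (t i) (-R) with h | h
          · exact h
          · exact absurd h1 (not_le.2 (hti h))
        have := gterm_neg hapos (hale i hαi) hR0.le h2.le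
        have haR : M + 1 ≤ a * R := by
          have h3 := hRa
          rw [div_le_iff₀ hapos] at h3
          nlinarith [h3]
        exact le_trans haR this
      · -- t i > R
        have hgp := gterm_pos hapos (hale i hαi) (simplex_le_one hα i) hRaa h1.le
        have hr2 : M + 1 ≤ R := by
          have h4 : (M + 1) ≤ (M + 1) / a := by
            rw [le_div_iff₀ hapos]
            nlinarith [hM0, ha1]
          linarith [hRa]
        linarith [hgp]
    -- sum over remaining coordinates
    have hrest : ∀ j, -(1/2) ≤ (1/2) * (α j * Real.exp (t j))^2 - α j * t j :=
      fun j => gterm_lb (hα.1 j) (simplex_le_one hα j)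
    have hsum : M + 1 - d / 2 ≤ ∑ j, ((1/2) * (α j * Real.exp (t j))^2 - α j * t j) := by
      have hsplit := Finset.add_sum_erase Finset.univ
        (fun j => (1/2) * (α j * Real.exp (t j))^2 - α j * t j) (Finset.mem_univ i)
      have hbound : ∑ j ∈ Finset.univ.erase i,
          ((1/2) * (α j * Real.exp (t j))^2 - α j * t j)
          ≥ ∑ j ∈ Finset.univ.erase i, (-(1/2) : ℝ) :=
        Finset.sum_le_sum fun j _ => hrest j
      have hcard : (((Finset.univ.erase i).card : ℝ)) ≤ d := by
        have := Finset.card_erase_le (s := Finset.univ) (a := i)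
        have h2 : (Finset.univ : Finset (Fin d)).card = d := by simp
        calc (((Finset.univ.erase i).card : ℝ)) ≤ ((Finset.univ : Finset (Fin d)).card : ℝ) := by
              exact_mod_cast this
        _ = d := by exact_mod_cast h2
      have hconst : ∑ j ∈ Finset.univ.erase i, (-(1/2) : ℝ)
          = -(((Finset.univ.erase i).card : ℝ)) / 2 := by
        rw [Finset.sum_const]
        simp
        ring
      rw [← hsplit]
      rw [hconst] at hbound
      have : -((d:ℝ))/2 ≤ -(((Finset.univ.erase i).card : ℝ)) / 2 := by linarith
      linarith
    have := Fobj_lower (C := C) hCdiag hα t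
    have hM1 : Fobj C α 0 < M + 1 - d / 2 := by linarith [hMF]
    linarith
  -- t0 is a global minimum over V
  have hminV : ∀ t ∈ V, Fobj C α t0 ≤ Fobj C α t := by
    intro t ht
    by_cases htb : t ∈ box
    · exact isMinOn_iff.1 ht0min t ⟨ht, htb⟩
    · have h1 := hbig t ht htb
      have h2 : Fobj C α t0 ≤ Fobj C α 0 := isMinOn_iff.1 ht0min 0 h0mem
      linarith
  -- Fobj only depends on coordinates in the support
  have hFcongr : ∀ t t' : Fin d → ℝ, (∀ i, α i ≠ 0 → t i = t' i) → Fobj C α t = Fobj C α t' := by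
    intro t t' h
    unfold Fobj
    congr 1
    · congr 1
      refine Finset.sum_congr rfl fun i _ => Finset.sum_congr rfl fun j _ => ?_
      by_cases hi : α i = 0
      · simp [hi]
      · by_cases hj : α j = 0
        · simp [hj]
        · rw [h i hi, h j hj]
    · refine Finset.sum_congr rfl fun i _ => ?_
      by_cases hi : α i = 0
      · simp [hi]
      · rw [h i hi]
  -- t0 is a global minimum
  have hminAll : ∀ t, Fobj C α t0 ≤ Fobj C α t := by
    intro t
    set t' : Fin d → ℝ := fun i => if α i = 0 then 0 else t i with ht'
    have ht'V : t' ∈ V := by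
      intro i hi
      simp [ht', hi]
    have he : Fobj C α t' = Fobj C α t := by
      refine hFcongr t' t fun i hi => ?_
      simp [ht', hi]
    calc Fobj C α t0 ≤ Fobj C α t' := hminV t' ht'V
    _ = Fobj C α t := he
  -- first-order conditions
  have hfoc : ∀ i, 0 < α i →
      Real.exp (t0 i) * (∑ j, α j * Real.exp (t0 j) * kernelK C i j) = 1 :=
    fun i hi => Fobj_foc hCsym hminAll hi
  -- define the potential
  set f : Fin d → ℝ := fun i => 2 * Real.log (∑ j, α j * Real.exp (t0 j) * kernelK C i j)
    with hf
  have hsumpos : ∀ i, 0 < ∑ j, α j * Real.exp (t0 j) * kernelK C i j := by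
    intro i
    refine Finset.sum_pos' (fun j _ => mul_nonneg (mul_nonneg (hα.1 j) (Real.exp_pos _).le)
      (K_pos i j).le) ⟨k0, Finset.mem_univ k0, ?_⟩
    exact mul_pos (mul_pos hk0 (Real.exp_pos _)) (K_pos i k0)
  have hexpf : ∀ i, Real.exp (f i / 2) = ∑ j, α j * Real.exp (t0 j) * kernelK C i j := by
    intro i
    rw [hf]
    show Real.exp (2 * Real.log (∑ j, α j * Real.exp (t0 j) * kernelK C i j) / 2) = _
    rw [show (2:ℝ) * Real.log (∑ j, α j * Real.exp (t0 j) * kernelK C i j) / 2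
      = Real.log (∑ j, α j * Real.exp (t0 j) * kernelK C i j) by ring]
    exact Real.exp_log (hsumpos i)
  have hexpnf : ∀ j, 0 < α j → Real.exp (-f j / 2) = Real.exp (t0 j) := by
    intro j hj
    have h1 : Real.exp (f j / 2) = Real.exp (-(t0 j)) := by
      rw [hexpf j]
      have h2 := hfoc j hj
      have h3 : Real.exp (t0 j) ≠ 0 := ne_of_gt (Real.exp_pos _)
      rw [Real.exp_neg]
      exact eq_inv_of_mul_eq_one_left (by rw [mul_comm]; exact h2)
    have : -f j / 2 = t0 j := by
      have := congrArg Real.log h1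
      rw [Real.log_exp, Real.log_exp] at this
      linarith
    rw [this]
  refine ⟨f, (pot_iff hα).2 fun i => ?_⟩
  rw [hexpf i]
  refine Finset.sum_congr rfl fun j _ => ?_
  by_cases hj : 0 < α j
  · rw [show -(f j + C i j)/2 = -f j/2 + (-C i j/2) by ring, Real.exp_add, hexpnf j hj]
    rw [kernelK]
    show α j * Real.exp (t0 j) * Real.exp (-C i j / 2)
        = α j * (Real.exp (t0 j) * Real.exp (-C i j / 2))
    ring
  · have : α j = 0 := le_antisymm (not_lt.1 hj) (hα.1 j) |>.symm ▸ rfl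
    have hj0 : α j = 0 := by
      rcases (hα.1 j).lt_or_eq with h | h
      · exact absurd h hj
      · exact h.symm
    rw [hj0]
    ring

end Existence


section Comparison

variable {α : Fin d → ℝ}

/-- Comparison lemma: an exact positive solution is below any super-solution that is
exact on the support. -/
lemma comp_le (hα : α ∈ simplexS d) {u w : Fin d → ℝ}
    (hu0 : ∀ i, 0 < u i) (hw0 : ∀ i, 0 < w i)
    (hu : ∀ i, u i * (∑ j, α j * u j * kernelK C i j) = 1)
    (hwS : ∀ i, 0 < α i → w i * (∑ j, α j * w j * kernelK C i j) = 1)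
    (hwAll : ∀ i, 1 ≤ w i * (∑ j, α j * w j * kernelK C i j)) :
    ∀ i, u i ≤ w i := by
  classical
  obtain ⟨k0, hk0⟩ := simplex_exists_pos hα
  set S : Finset (Fin d) := Finset.univ.filter (fun i => 0 < α i) with hS
  have hSne : S.Nonempty := ⟨k0, by simp [hS, hk0]⟩
  have hmemS : ∀ i, i ∈ S ↔ 0 < α i := by
    intro i; simp [hS]
  obtain ⟨i0, hi0S, hi0max⟩ := Finset.exists_max_image S (fun i => u i / w i) hSne
  obtain ⟨i1, hi1S, hi1min⟩ := Finset.exists_min_image S (fun i => u i / w i) hSne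
  have hα0 := (hmemS i0).1 hi0S
  have hα1 := (hmemS i1).1 hi1S
  -- notation
  have ht0 : 0 < u i0 / w i0 := div_pos (hu0 i0) (hw0 i0)
  have ht1 : 0 < u i1 / w i1 := div_pos (hu0 i1) (hw0 i1)
  have hub : ∀ j, 0 < α j → u j ≤ (u i0 / w i0) * w j := by
    intro j hj
    have := hi0max j ((hmemS j).2 hj)
    rw [div_le_div_iff₀ (hw0 j) (hw0 i0)] at this
    rw [div_mul_eq_mul_div, le_div_iff₀ (hw0 i0)]
    linarith
  have hlb : ∀ j, 0 < α j → (u i1 / w i1) * w j ≤ u j := by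
    intro j hj
    have := hi1min j ((hmemS j).2 hj)
    rw [div_le_div_iff₀ (hw0 i1) (hw0 j)] at this
    rw [div_mul_eq_mul_div, div_le_iff₀ (hw0 i1)]
    linarith
  -- sum bounds
  have hsum_ub : ∀ i, ∑ j, α j * u j * kernelK C i j
      ≤ (u i0 / w i0) * ∑ j, α j * w j * kernelK C i j := by
    intro i
    rw [Finset.mul_sum]
    refine Finset.sum_le_sum fun j _ => ?_
    rcases (hα.1 j).lt_or_eq with hj | hj
    · have := hub j hj
      have hK := (K_pos (C := C) i j).le
      calc α j * u j * kernelK C i j ≤ α j * ((u i0 / w i0) * w j) * kernelK C i j := by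
            apply mul_le_mul_of_nonneg_right _ hK
            exact mul_le_mul_of_nonneg_left this (hα.1 j)
      _ = u i0 / w i0 * (α j * w j * kernelK C i j) := by ring
    · rw [← hj]; ring_nf; exact le_refl _
  have hsum_lb : ∀ i, (u i1 / w i1) * ∑ j, α j * w j * kernelK C i j
      ≤ ∑ j, α j * u j * kernelK C i j := by
    intro i
    rw [Finset.mul_sum]
    refine Finset.sum_le_sum fun j _ => ?_
    rcases (hα.1 j).lt_or_eq with hj | hj
    · have := hlb j hj
      have hK := (K_pos (C := C) i j).le
      calc u i1 / w i1 * (α j * w j * kernelK C i j)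
          = α j * ((u i1 / w i1) * w j) * kernelK C i j := by ring
      _ ≤ α j * u j * kernelK C i j := by
            apply mul_le_mul_of_nonneg_right _ hK
            exact mul_le_mul_of_nonneg_left this (hα.1 j)
    · rw [← hj]; ring_nf; exact le_refl _
  have hwsum_pos : ∀ i, 0 < ∑ j, α j * w j * kernelK C i j := by
    intro i
    refine Finset.sum_pos' (fun j _ => mul_nonneg (mul_nonneg (hα.1 j) (hw0 j).le)
      (K_pos i j).le) ⟨k0, Finset.mem_univ k0, ?_⟩
    exact mul_pos (mul_pos hk0 (hw0 k0)) (K_pos i k0)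
  have husum_pos : ∀ i, 0 < ∑ j, α j * u j * kernelK C i j := by
    intro i
    refine Finset.sum_pos' (fun j _ => mul_nonneg (mul_nonneg (hα.1 j) (hu0 j).le)
      (K_pos i j).le) ⟨k0, Finset.mem_univ k0, ?_⟩
    exact mul_pos (mul_pos hk0 (hu0 k0)) (K_pos i k0)
  -- step 1 : t*s ≤ 1
  have hts : (u i0 / w i0) * (u i1 / w i1) ≤ 1 := by
    have h2 : (u i1 / w i1) * ∑ j, α j * w j * kernelK C i0 j
        ≤ ∑ j, α j * u j * kernelK C i0 j := hsum_lb i0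
    have h4 : u i0 = (u i0 / w i0) * w i0 :=
      (div_mul_cancel₀ (u i0) (ne_of_gt (hw0 i0))).symm
    have h5 : w i0 * ∑ j, α j * w j * kernelK C i0 j = 1 := hwS i0 hα0
    calc (u i0 / w i0) * (u i1 / w i1)
        = (u i1 / w i1) * ((u i0 / w i0) * (w i0 * ∑ j, α j * w j * kernelK C i0 j)) := by
          rw [h5]; ring
    _ = u i0 * ((u i1 / w i1) * ∑ j, α j * w j * kernelK C i0 j) := by
          rw [h4]; field_simp [ne_of_gt (hw0 i0), ne_of_gt (hw0 i1)]
    _ ≤ u i0 * ∑ j, α j * u j * kernelK C i0 j :=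
          mul_le_mul_of_nonneg_left h2 (hu0 i0).le
    _ = 1 := hu i0
  -- step 2 : s*t ≥ 1
  have hst : 1 ≤ (u i0 / w i0) * (u i1 / w i1) := by
    have h2 : ∑ j, α j * u j * kernelK C i1 j
        ≤ (u i0 / w i0) * ∑ j, α j * w j * kernelK C i1 j := hsum_ub i1
    have h4 : u i1 = (u i1 / w i1) * w i1 :=
      (div_mul_cancel₀ (u i1) (ne_of_gt (hw0 i1))).symm
    have h5 : w i1 * ∑ j, α j * w j * kernelK C i1 j = 1 := hwS i1 hα1
    calc (1:ℝ) = u i1 * ∑ j, α j * u j * kernelK C i1 j := (hu i1).symm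
    _ ≤ u i1 * ((u i0 / w i0) * ∑ j, α j * w j * kernelK C i1 j) :=
          mul_le_mul_of_nonneg_left h2 (hu0 i1).le
    _ = (u i0 / w i0) * (u i1 / w i1) * (w i1 * ∑ j, α j * w j * kernelK C i1 j) := by
          rw [h4]; field_simp [ne_of_gt (hw0 i0), ne_of_gt (hw0 i1)]
    _ = (u i0 / w i0) * (u i1 / w i1) := by rw [h5, mul_one]
  have htseq : (u i0 / w i0) * (u i1 / w i1) = 1 := le_antisymm hts hst
  -- equality forces u = s*w on the support (via the i0 equation)
  have hsum_eq : ∑ j, α j * u j * kernelK C i0 j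
      = (u i1 / w i1) * ∑ j, α j * w j * kernelK C i0 j := by
    have h5 : w i0 * ∑ j, α j * w j * kernelK C i0 j = 1 := hwS i0 hα0
    have hne : u i0 ≠ 0 := ne_of_gt (hu0 i0)
    have key : u i0 * (∑ j, α j * u j * kernelK C i0 j)
        = u i0 * ((u i1 / w i1) * ∑ j, α j * w j * kernelK C i0 j) := by
      rw [hu i0]
      have : u i0 * ((u i1 / w i1) * ∑ j, α j * w j * kernelK C i0 j)
          = (u i0 / w i0) * (u i1 / w i1) * (w i0 * ∑ j, α j * w j * kernelK C i0 j) := by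
        field_simp [ne_of_gt (hw0 i0), ne_of_gt (hw0 i1)]
      rw [this, htseq, h5, mul_one]
    exact mul_left_cancel₀ hne key
  have hterm_eq : ∀ j, 0 < α j → u j = (u i1 / w i1) * w j := by
    have h6 : ∀ j ∈ Finset.univ, (u i1 / w i1) * (α j * w j * kernelK C i0 j)
        ≤ α j * u j * kernelK C i0 j := by
      intro j _
      rcases (hα.1 j).lt_or_eq with hj | hj
      · have := hlb j hj
        have hK := (K_pos (C := C) i0 j).le
        calc (u i1 / w i1) * (α j * w j * kernelK C i0 j)
            = α j * ((u i1 / w i1) * w j) * kernelK C i0 j := by ring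
        _ ≤ α j * u j * kernelK C i0 j := by
              apply mul_le_mul_of_nonneg_right _ hK
              exact mul_le_mul_of_nonneg_left this (hα.1 j)
      · rw [← hj]; ring_nf; exact le_refl _
    have h7 : ∑ j, (u i1 / w i1) * (α j * w j * kernelK C i0 j)
        = ∑ j, α j * u j * kernelK C i0 j := by
      rw [← Finset.mul_sum, hsum_eq]
    have h8 := (Finset.sum_eq_sum_iff_of_le h6).1 h7
    intro j hj
    have h9 := (h8 j (Finset.mem_univ j)).symm
    have hKne : kernelK C i0 j ≠ 0 := ne_of_gt (K_pos i0 j)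
    have hαne : α j ≠ 0 := ne_of_gt hj
    have : α j * u j * kernelK C i0 j = α j * ((u i1 / w i1) * w j) * kernelK C i0 j := by
      rw [h9]; ring
    have h10 := mul_right_cancel₀ hKne this
    have h11 : α j * u j = α j * ((u i1 / w i1) * w j) := h10
    exact mul_left_cancel₀ hαne h11
  -- at i0, deduce s = t, hence s = 1
  have hs1 : u i1 / w i1 = 1 := by
    have h := hterm_eq i0 hα0
    have : u i0 / w i0 = u i1 / w i1 := by
      rw [h]
      exact mul_div_cancel_right₀ _ (ne_of_gt (hw0 i0))
    rw [this] at htseq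
    have h2 : (u i1 / w i1) ^ 2 = 1 := by nlinarith [htseq]
    nlinarith [ht1, h2]
  -- so u = w on the support
  have huwS : ∀ j, 0 < α j → u j = w j := by
    intro j hj
    have := hterm_eq j hj
    rw [hs1, one_mul] at this
    exact this
  -- conclude everywhere
  intro i
  have hsums : ∑ j, α j * u j * kernelK C i j = ∑ j, α j * w j * kernelK C i j := by
    refine Finset.sum_congr rfl fun j _ => ?_
    rcases (hα.1 j).lt_or_eq with hj | hj
    · rw [huwS j hj]
    · rw [← hj]; ring
  have h1 : u i * (∑ j, α j * w j * kernelK C i j) = 1 := by rw [← hsums]; exact hu i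
  have h2 := hwAll i
  have h3 := hwsum_pos i
  nlinarith [h1, h2, h3, hu0 i, hw0 i]

/-- potentials are unique. -/
lemma pot_unique (hα : α ∈ simplexS d) {f g : Fin d → ℝ}
    (hf : IsSinkhornPotential C α f) (hg : IsSinkhornPotential C α g) : f = g := by
  have hKu : ∀ (h : Fin d → ℝ), IsSinkhornPotential C α h →
      ∀ i, Real.exp (-h i / 2) * (∑ j, α j * Real.exp (-h j / 2) * kernelK C i j) = 1 := by
    intro h hh i
    rw [pot_Ku hα hh i, ← Real.exp_add, show -h i / 2 + h i / 2 = 0 by ring, Real.exp_zero]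
  have h1 := comp_le hα (u := fun i => Real.exp (-f i / 2)) (w := fun i => Real.exp (-g i / 2))
    (fun i => Real.exp_pos _) (fun i => Real.exp_pos _)
    (hKu f hf) (fun i _ => hKu g hg i) (fun i => (hKu g hg i).ge)
  have h2 := comp_le hα (u := fun i => Real.exp (-g i / 2)) (w := fun i => Real.exp (-f i / 2))
    (fun i => Real.exp_pos _) (fun i => Real.exp_pos _)
    (hKu g hg) (fun i _ => hKu f hf i) (fun i => (hKu f hf i).ge)
  funext i
  have he : Real.exp (-f i / 2) = Real.exp (-g i / 2) := le_antisymm (h1 i) (h2 i)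
  have := Real.exp_injective he
  linarith

lemma gradOmega_spec (hCsym : C.IsSymm) (hCdiag : ∀ i, C i i = 0) (hα : α ∈ simplexS d) :
    IsSinkhornPotential C α (gradOmega C α) := by
  unfold gradOmega
  rw [dif_pos (exists_pot hCsym hCdiag hα)]
  exact (exists_pot hCsym hCdiag hα).choose_spec

lemma gradOmega_unique (hCsym : C.IsSymm) (hCdiag : ∀ i, C i i = 0) (hα : α ∈ simplexS d)
    {f : Fin d → ℝ} (hf : IsSinkhornPotential C α f) : f = gradOmega C α :=
  pot_unique hα hf (gradOmega_spec hCsym hCdiag hα)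

end Comparison


section Gsoftmax

variable {f : Fin d → ℝ}

lemma Phi_continuous (f : Fin d → ℝ) : Continuous (fun β => Phi C β f) := by
  unfold Phi
  refine continuous_finset_sum _ fun i _ => continuous_finset_sum _ fun j _ => ?_
  exact ((continuous_apply i).mul (continuous_apply j)).mul continuous_const

lemma gsoftmax_exists (hd : 1 ≤ d) (f : Fin d → ℝ) :
    ∃ α ∈ simplexS d, IsMinOn (fun β => Phi C β f) (simplexS d) α := by
  have hne : (simplexS d).Nonempty := by
    refine ⟨fun _ => (d : ℝ)⁻¹, fun i => by positivity, ?_⟩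
    rw [Finset.sum_const, Finset.card_univ, Fintype.card_fin, nsmul_eq_mul]
    field_simp
  exact (isCompact_stdSimplex ℝ (Fin d)).exists_isMinOn hne (Phi_continuous f).continuousOn

lemma gsoftmax_spec (hd : 1 ≤ d) (f : Fin d → ℝ) :
    gsoftmax C f ∈ simplexS d
      ∧ IsMinOn (fun β => Phi C β f) (simplexS d) (gsoftmax C f) := by
  unfold gsoftmax
  rw [dif_pos (gsoftmax_exists hd f)]
  exact ⟨(gsoftmax_exists hd f).choose_spec.1, (gsoftmax_exists hd f).choose_spec.2⟩

lemma simplex_vec_ne_zero {β : Fin d → ℝ} (hβ : β ∈ simplexS d) :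
    (fun i => β i * Real.exp (-f i / 2)) ≠ 0 := by
  obtain ⟨k, hk⟩ := simplex_exists_pos hβ
  intro h
  have := congrFun h k
  simp only [Pi.zero_apply] at this
  exact absurd this (ne_of_gt (mul_pos hk (Real.exp_pos _)))

lemma gsoftmax_pos (hd : 1 ≤ d) (hK : (kernelK C).PosDef) (f : Fin d → ℝ) :
    0 < Phi C (gsoftmax C f) f := by
  rw [Phi_eq_Q]
  exact Q_pos hK (simplex_vec_ne_zero (gsoftmax_spec hd f).1)

lemma OmegaStar_eq (hd : 1 ≤ d) (f : Fin d → ℝ) :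
    OmegaStar C f = -Real.log (Phi C (gsoftmax C f) f) := by
  unfold OmegaStar
  obtain ⟨hmem, hmin⟩ := gsoftmax_spec (C := C) hd f
  have hleast : IsLeast ((fun α => Phi C α f) '' simplexS d) (Phi C (gsoftmax C f) f) := by
    constructor
    · exact ⟨gsoftmax C f, hmem, rfl⟩
    · rintro y ⟨β, hβ, rfl⟩
      exact isMinOn_iff.1 hmin β hβ
  rw [hleast.csInf_eq]

/-- uniqueness of the Φ-minimizer under positive definiteness. -/
lemma gsoftmax_unique (hd : 1 ≤ d) (hCsym : C.IsSymm) (hK : (kernelK C).PosDef)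
    {β : Fin d → ℝ} (hβ : β ∈ simplexS d)
    (hmin : IsMinOn (fun γ => Phi C γ f) (simplexS d) β) : β = gsoftmax C f := by
  by_contra hne
  obtain ⟨hmem, hmin'⟩ := gsoftmax_spec (C := C) hd f
  set γ := gsoftmax C f with hγ
  have hm1 : Phi C β f ≤ Phi C γ f := isMinOn_iff.1 hmin γ hmem
  have hm2 : Phi C γ f ≤ Phi C β f := isMinOn_iff.1 hmin' β hβ
  have hmeq : Phi C β f = Phi C γ f := le_antisymm hm1 hm2
  -- midpoint
  have hmid : (fun i => (1/2 : ℝ) * β i + (1/2) * γ i) ∈ simplexS d := by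
    constructor
    · intro i
      have := hβ.1 i; have := hmem.1 i
      positivity
    · rw [Finset.sum_add_distrib, ← Finset.mul_sum, ← Finset.mul_sum,
        simplex_sum hβ, simplex_sum hmem]
      norm_num
  have hmidval : Phi C (fun i => (1/2 : ℝ) * β i + (1/2) * γ i) f
      = Phi C β f - Qf C (fun i => (1/2 : ℝ) * (β i * Real.exp (-f i / 2))
          - (1/2) * (γ i * Real.exp (-f i / 2))) := by
    rw [Phi_eq_Q, Phi_eq_Q]
    have e1 : (fun i => ((1/2 : ℝ) * β i + (1/2) * γ i) * Real.exp (-f i / 2))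
        = fun i => (1/2 : ℝ) * (β i * Real.exp (-f i / 2))
          + (1/2) * (γ i * Real.exp (-f i / 2)) := by
      funext i; ring
    have e2 : (fun i => (1/2 : ℝ) * (β i * Real.exp (-f i / 2))
          - (1/2) * (γ i * Real.exp (-f i / 2)))
        = fun i => (1/2 : ℝ) * (β i * Real.exp (-f i / 2))
          + (-(1/2)) * (γ i * Real.exp (-f i / 2)) := by
      funext i; ring
    rw [e1, e2, Q_combo, Q_combo]
    have hQβγ : Qf C (fun i => γ i * Real.exp (-f i / 2))
        = Qf C (fun i => β i * Real.exp (-f i / 2)) := by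
      rw [← Phi_eq_Q, ← Phi_eq_Q, hmeq]
    rw [hQβγ]
    ring
  have hQdiff : 0 < Qf C (fun i => (1/2 : ℝ) * (β i * Real.exp (-f i / 2))
      - (1/2) * (γ i * Real.exp (-f i / 2))) := by
    refine Q_pos hK ?_
    intro h
    apply hne
    funext i
    have := congrFun h i
    simp only [Pi.zero_apply] at this
    have hexp : Real.exp (-f i / 2) ≠ 0 := ne_of_gt (Real.exp_pos _)
    have : β i * Real.exp (-f i / 2) = γ i * Real.exp (-f i / 2) := by linarith
    exact mul_right_cancel₀ hexp this
  have hlt : Phi C (fun i => (1/2 : ℝ) * β i + (1/2) * γ i) f < Phi C β f := by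
    rw [hmidval]; linarith
  exact absurd (isMinOn_iff.1 hmin _ hmid) (not_le.2 hlt)

private lemma affine_nonneg {A B : ℝ} (h : ∀ s : ℝ, 0 < s → s ≤ 1 → 0 ≤ A + s * B) :
    0 ≤ A := by
  by_contra hA
  push_neg at hA
  set s := min 1 (-A / (2 * (|B| + 1))) with hs
  have hs0 : 0 < s := by
    apply lt_min one_pos
    have : 0 < -A := by linarith
    positivity
  have hs1 : s ≤ 1 := min_le_left _ _
  have hsB : s * B ≤ -A / 2 := by
    have hB1 : 0 < |B| + 1 := by positivity
    have h1 : s * B ≤ s * |B| := mul_le_mul_of_nonneg_left (le_abs_self B) hs0.le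
    have h2 : s ≤ -A / (2 * (|B| + 1)) := min_le_right _ _
    have h3 : s * |B| ≤ (-A / (2 * (|B| + 1))) * |B| :=
      mul_le_mul_of_nonneg_right h2 (abs_nonneg B)
    have h4 : (-A / (2 * (|B| + 1))) * |B| ≤ -A / 2 := by
      rw [div_mul_eq_mul_div, div_le_div_iff₀ (by positivity) (by norm_num)]
      nlinarith [abs_nonneg B]
    linarith
  have := h s hs0 hs1
  linarith

/-- KKT inequality for the simplex-constrained minimizer of Φ. -/
lemma gsoftmax_kkt (hd : 1 ≤ d) (hCsym : C.IsSymm) (f : Fin d → ℝ) (i : Fin d) :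
    Phi C (gsoftmax C f) f
      ≤ ∑ j, gsoftmax C f j * Real.exp (-(f i + f j + C i j) / 2) := by
  obtain ⟨hmem, hmin⟩ := gsoftmax_spec (C := C) hd f
  set γ := gsoftmax C f with hγ
  set m := Phi C γ f with hm
  set x : Fin d → ℝ := fun j => γ j * Real.exp (-f j / 2) with hx
  set y : Fin d → ℝ := fun j => (if j = i then (1:ℝ) else 0) * Real.exp (-f j / 2) with hy
  set b : ℝ := ∑ j, γ j * Real.exp (-(f i + f j + C i j) / 2) with hb
  have hQx : Qf C x = m := by rw [hm, Phi_eq_Q]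
  have hBxy : Bf C x y = b := by
    rw [hb]
    unfold Bf
    have hinner : ∀ k, ∑ j, x k * y j * kernelK C k j
        = x k * Real.exp (-f i / 2) * kernelK C k i := by
      intro k
      rw [Finset.sum_eq_single i]
      · simp [hy]
      · intro j _ hji
        simp [hy, hji]
      · intro h; exact absurd (Finset.mem_univ i) h
    rw [Finset.sum_congr rfl fun k _ => hinner k]
    refine Finset.sum_congr rfl fun k _ => ?_
    rw [hx]
    show γ k * Real.exp (-f k / 2) * Real.exp (-f i / 2) * kernelK C k i = _
    rw [kernelK]
    show γ k * Real.exp (-f k / 2) * Real.exp (-f i / 2) * Real.exp (-C k i / 2) = _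
    rw [show γ k * Real.exp (-f k / 2) * Real.exp (-f i / 2) * Real.exp (-C k i / 2)
        = γ k * (Real.exp (-f k / 2) * Real.exp (-f i / 2) * Real.exp (-C k i / 2)) by ring,
      ← Real.exp_add, ← Real.exp_add]
    congr 2
    rw [show C i k = C k i from (hCsym.apply i k).symm]
    ring
  have hByx : Bf C y x = b := by rw [Bf_symm hCsym, hBxy]
  have hQy : 0 ≤ Qf C y := by
    unfold Qf
    refine Finset.sum_nonneg fun k _ => Finset.sum_nonneg fun j _ => ?_
    rw [hy]
    refine mul_nonneg (mul_nonneg (mul_nonneg ?_ (Real.exp_pos _).le)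
      (mul_nonneg ?_ (Real.exp_pos _).le)) (K_pos k j).le
    · by_cases h : k = i <;> simp [h]
    · by_cases h : j = i <;> simp [h]
  -- the directional inequality
  have hdir : ∀ s : ℝ, 0 < s → s ≤ 1 →
      0 ≤ (2 * b - 2 * m) + s * (m - 2 * b + Qf C y) := by
    intro s hs0 hs1
    have hγs : (fun j => (1 - s) * γ j + s * (if j = i then (1:ℝ) else 0)) ∈ simplexS d := by
      constructor
      · intro j
        show (0:ℝ) ≤ (1 - s) * γ j + s * (if j = i then (1:ℝ) else 0)
        have h1 := hmem.1 j
        have h2 : (0:ℝ) ≤ if j = i then (1:ℝ) else 0 := by by_cases h : j = i <;> simp [h]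
        nlinarith
      · rw [Finset.sum_add_distrib, ← Finset.mul_sum, ← Finset.mul_sum, simplex_sum hmem]
        rw [Finset.sum_ite_eq' Finset.univ i (fun _ => (1:ℝ))]
        simp
    have hval : Phi C (fun j => (1 - s) * γ j + s * (if j = i then (1:ℝ) else 0)) f
        = (1 - s)^2 * m + (1 - s) * s * b + s * (1 - s) * b + s^2 * Qf C y := by
      rw [Phi_eq_Q]
      have e1 : (fun j => ((1 - s) * γ j + s * (if j = i then (1:ℝ) else 0))
            * Real.exp (-f j / 2))
          = fun j => (1 - s) * x j + s * y j := by
        funext j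
        rw [hx, hy]
        show ((1 - s) * γ j + s * (if j = i then (1:ℝ) else 0)) * Real.exp (-f j / 2)
            = (1 - s) * (γ j * Real.exp (-f j / 2))
              + s * ((if j = i then (1:ℝ) else 0) * Real.exp (-f j / 2))
        ring
      rw [e1, Q_combo, hQx, hBxy, hByx]
      ring
    have hge : m ≤ Phi C (fun j => (1 - s) * γ j + s * (if j = i then (1:ℝ) else 0)) f :=
      isMinOn_iff.1 hmin _ hγs
    rw [hval] at hge
    have hkey : 0 ≤ s * ((2 * b - 2 * m) + s * (m - 2 * b + Qf C y)) := by nlinarith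
    have := (mul_nonneg_iff_of_pos_left hs0).1 hkey
    exact this
  have hA := affine_nonneg hdir
  have hfin : m ≤ b := by linarith
  calc Phi C (gsoftmax C f) f = m := by rw [hm]
  _ ≤ b := hfin
  _ = ∑ j, gsoftmax C f j * Real.exp (-(f i + f j + C i j) / 2) := by rw [hb]

end Gsoftmax


section Pointwise

variable {α β f : Fin d → ℝ}

lemma gsoftmax_kkt_eq (hd : 1 ≤ d) (hCsym : C.IsSymm) (f : Fin d → ℝ) {i : Fin d}
    (hi : 0 < gsoftmax C f i) :
    ∑ j, gsoftmax C f j * Real.exp (-(f i + f j + C i j) / 2)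
      = Phi C (gsoftmax C f) f := by
  obtain ⟨hmem, _⟩ := gsoftmax_spec (C := C) hd f
  set γ := gsoftmax C f with hγ
  set m := Phi C γ f with hm
  set b : Fin d → ℝ := fun i => ∑ j, γ j * Real.exp (-(f i + f j + C i j) / 2) with hbdef
  have hkkt : ∀ i, m ≤ b i := fun i => gsoftmax_kkt hd hCsym f i
  have hsum : ∑ i, γ i * b i = m := by
    rw [hm]
    unfold Phi
    refine Finset.sum_congr rfl fun i _ => ?_
    rw [hbdef]
    show γ i * ∑ j, γ j * Real.exp (-(f i + f j + C i j) / 2) = _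
    rw [Finset.mul_sum]
    exact Finset.sum_congr rfl fun j _ => by ring
  have hzero : ∑ i, γ i * (b i - m) = 0 := by
    have : ∑ i, γ i * (b i - m) = (∑ i, γ i * b i) - m * ∑ i, γ i := by
      rw [Finset.mul_sum, ← Finset.sum_sub_distrib]
      exact Finset.sum_congr rfl fun i _ => by ring
    rw [this, hsum, simplex_sum hmem]
    ring
  have hterm := (Finset.sum_eq_zero_iff_of_nonneg
    (fun j (_ : j ∈ Finset.univ) =>
      mul_nonneg (hmem.1 j) (by linarith [hkkt j]))).1 hzero i (Finset.mem_univ i)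
  have : b i - m = 0 := by
    rcases mul_eq_zero.1 hterm with h | h
    · exact absurd h (ne_of_gt hi)
    · exact h
  have hbi : b i = m := by linarith
  exact hbi

/-- key bound : `f - ∇Ω(g-softmax f) ≤ -log m` coordinatewise. -/
lemma gsoftmax_pot_bound (hd : 1 ≤ d) (hCsym : C.IsSymm) (hCdiag : ∀ i, C i i = 0)
    (hK : (kernelK C).PosDef) (f : Fin d → ℝ) (i : Fin d) :
    f i - gradOmega C (gsoftmax C f) i ≤ -Real.log (Phi C (gsoftmax C f) f) := by
  obtain ⟨hmem, _⟩ := gsoftmax_spec (C := C) hd f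
  set γ := gsoftmax C f with hγ
  set m := Phi C γ f with hm
  have hm0 : 0 < m := gsoftmax_pos hd hK f
  have hpot : IsSinkhornPotential C γ (gradOmega C γ) := gradOmega_spec hCsym hCdiag hmem
  set g := gradOmega C γ with hg
  set u : Fin d → ℝ := fun i => Real.exp (-g i / 2) with hu
  set w : Fin d → ℝ := fun i => Real.exp (-(f i + Real.log m) / 2) with hw
  have hu1 : ∀ k, u k * (∑ j, γ j * u j * kernelK C k j) = 1 := by
    intro k
    rw [hu]
    show Real.exp (-g k / 2) * (∑ j, γ j * Real.exp (-g j / 2) * kernelK C k j) = 1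
    rw [pot_Ku hmem hpot k, ← Real.exp_add, show -g k / 2 + g k / 2 = 0 by ring, Real.exp_zero]
  have hwcalc : ∀ k, w k * (∑ j, γ j * w j * kernelK C k j)
      = (∑ j, γ j * Real.exp (-(f k + f j + C k j) / 2)) * m⁻¹ := by
    intro k
    rw [Finset.mul_sum, Finset.sum_mul]
    refine Finset.sum_congr rfl fun j _ => ?_
    rw [hw]
    show Real.exp (-(f k + Real.log m) / 2)
        * (γ j * Real.exp (-(f j + Real.log m) / 2) * kernelK C k j)
        = γ j * Real.exp (-(f k + f j + C k j) / 2) * m⁻¹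
    rw [kernelK]
    show Real.exp (-(f k + Real.log m) / 2)
        * (γ j * Real.exp (-(f j + Real.log m) / 2) * Real.exp (-C k j / 2))
        = γ j * Real.exp (-(f k + f j + C k j) / 2) * m⁻¹
    have hminv : Real.exp (-Real.log m) = m⁻¹ := by
      rw [Real.exp_neg, Real.exp_log hm0]
    rw [show Real.exp (-(f k + Real.log m) / 2)
        * (γ j * Real.exp (-(f j + Real.log m) / 2) * Real.exp (-C k j / 2))
        = γ j * (Real.exp (-(f k + Real.log m) / 2) * Real.exp (-(f j + Real.log m) / 2)
          * Real.exp (-C k j / 2)) by ring,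
      ← Real.exp_add, ← Real.exp_add,
      show -(f k + Real.log m) / 2 + -(f j + Real.log m) / 2 + -C k j / 2
        = -(f k + f j + C k j) / 2 + -Real.log m by ring,
      Real.exp_add, hminv]
    ring
  have hwAll : ∀ k, 1 ≤ w k * (∑ j, γ j * w j * kernelK C k j) := by
    intro k
    rw [hwcalc k]
    have hb : m ≤ ∑ j, γ j * Real.exp (-(f k + f j + C k j) / 2) :=
      gsoftmax_kkt hd hCsym f k
    have h2 : m * m⁻¹ ≤ (∑ j, γ j * Real.exp (-(f k + f j + C k j) / 2)) * m⁻¹ :=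
      mul_le_mul_of_nonneg_right hb (inv_nonneg.2 hm0.le)
    rwa [mul_inv_cancel₀ (ne_of_gt hm0)] at h2
  have hwS : ∀ k, 0 < γ k → w k * (∑ j, γ j * w j * kernelK C k j) = 1 := by
    intro k hk
    rw [hwcalc k]
    have he : ∑ j, γ j * Real.exp (-(f k + f j + C k j) / 2) = m :=
      gsoftmax_kkt_eq hd hCsym f (i := k) hk
    rw [he, mul_inv_cancel₀ (ne_of_gt hm0)]
  have hcomp := comp_le hmem (u := u) (w := w)
    (fun k => Real.exp_pos _) (fun k => Real.exp_pos _) hu1 hwS hwAll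
  have := hcomp i
  rw [hu, hw] at this
  have h2 : -g i / 2 ≤ -(f i + Real.log m) / 2 := Real.exp_le_exp.1 this
  show f i - g i ≤ -Real.log m
  linarith

lemma DOmega_eq (hCsym : C.IsSymm) (hCdiag : ∀ i, C i i = 0)
    (hα : α ∈ simplexS d) (hβ : β ∈ simplexS d) :
    DOmega C α β = Omega C α - ∑ i, gradOmega C β i * α i := by
  unfold DOmega
  have hpot : IsSinkhornPotential C β (gradOmega C β) := gradOmega_spec hCsym hCdiag hβ
  have hΩβ : Omega C β = ∑ i, β i * gradOmega C β i := pot_Omega hCsym hβ hpot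
  have hsplit : ∑ i, gradOmega C β i * (α i - β i)
      = (∑ i, gradOmega C β i * α i) - ∑ i, β i * gradOmega C β i := by
    rw [← Finset.sum_sub_distrib]
    exact Finset.sum_congr rfl fun i _ => by ring
  rw [hΩβ, hsplit]
  ring

lemma jensen_log (hα : α ∈ simplexS d) {x : Fin d → ℝ} (hx : ∀ i, 0 < x i) :
    ∑ i, α i * Real.log (x i) ≤ Real.log (∑ i, α i * x i) := by
  have hgm := Real.geom_mean_le_arith_mean_weighted Finset.univ α x
    (fun i _ => hα.1 i) (simplex_sum hα) (fun i _ => (hx i).le)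
  have hpos : 0 < ∏ i, x i ^ α i :=
    Finset.prod_pos fun i _ => Real.rpow_pos_of_pos (hx i) _
  have hlog : ∑ i, α i * Real.log (x i) = Real.log (∏ i, x i ^ α i) := by
    rw [Real.log_prod (fun i _ => ne_of_gt (Real.rpow_pos_of_pos (hx i) _))]
    exact Finset.sum_congr rfl fun i _ => (Real.log_rpow (hx i) _).symm
  rw [hlog]
  exact Real.log_le_log hpos hgm

lemma DOmega_nonneg' (hd : 1 ≤ d) (hCsym : C.IsSymm) (hCdiag : ∀ i, C i i = 0)
    (hK : (kernelK C).PosDef) (hα : α ∈ simplexS d) (hβ : β ∈ simplexS d) :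
    0 ≤ DOmega C α β := by
  have hpα : IsSinkhornPotential C α (gradOmega C α) := gradOmega_spec hCsym hCdiag hα
  have hpβ : IsSinkhornPotential C β (gradOmega C β) := gradOmega_spec hCsym hCdiag hβ
  set fα := gradOmega C α with hfα
  set fβ := gradOmega C β with hfβ
  rw [DOmega_eq hCsym hCdiag hα hβ, pot_Omega hCsym hα hpα]
  set x : Fin d → ℝ := fun i => Real.exp ((fβ i - fα i) / 2) with hx
  have hx0 : ∀ i, 0 < x i := fun i => Real.exp_pos _
  set u : Fin d → ℝ := fun i => α i * Real.exp (-fα i / 2) with hu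
  set w : Fin d → ℝ := fun i => β i * Real.exp (-fβ i / 2) with hw
  have hQu : Qf C u = 1 := by rw [hu, ← Phi_eq_Q]; exact pot_Phi_self hα hpα
  have hQw : Qf C w = 1 := by rw [hw, ← Phi_eq_Q]; exact pot_Phi_self hβ hpβ
  have hax : ∀ i, α i * x i = ∑ j, u i * w j * kernelK C i j := by
    intro i
    have hfac : ∑ j, u i * w j * kernelK C i j = u i * ∑ j, w j * kernelK C i j := by
      rw [Finset.mul_sum]
      exact Finset.sum_congr rfl fun j _ => by ring
    rw [hfac]
    have hKw : ∑ j, w j * kernelK C i j = Real.exp (fβ i / 2) := pot_Ku hβ hpβ i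
    rw [hKw, hu, hx]
    show α i * Real.exp ((fβ i - fα i) / 2) = α i * Real.exp (-fα i / 2) * Real.exp (fβ i / 2)
    rw [mul_assoc, ← Real.exp_add]
    congr 2
    ring
  have hsum_eq : ∑ i, α i * x i = Bf C u w := by
    unfold Bf
    exact Finset.sum_congr rfl fun i _ => hax i
  have hsum_pos : 0 < ∑ i, α i * x i := by
    obtain ⟨k, hk⟩ := simplex_exists_pos hα
    refine Finset.sum_pos' (fun i _ => mul_nonneg (hα.1 i) (hx0 i).le)
      ⟨k, Finset.mem_univ k, mul_pos hk (hx0 k)⟩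
  have hBle : Bf C u w ≤ 1 := by
    have hcs := sq_B_le hCsym hK (w := w) hQu
    rw [hQw] at hcs
    nlinarith [hsum_pos, hsum_eq]
  have hlog := jensen_log hα hx0
  have hlog2 : Real.log (∑ i, α i * x i) ≤ 0 := by
    rw [hsum_eq]
    exact Real.log_nonpos (by linarith [hsum_pos, hsum_eq]) hBle
  have hxlog : ∀ i, Real.log (x i) = (fβ i - fα i) / 2 := by
    intro i; rw [hx]; exact Real.log_exp _
  have hkey : ∑ i, α i * ((fβ i - fα i) / 2) ≤ 0 := by
    calc ∑ i, α i * ((fβ i - fα i) / 2) = ∑ i, α i * Real.log (x i) :=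
          Finset.sum_congr rfl fun i _ => by rw [hxlog i]
    _ ≤ Real.log (∑ i, α i * x i) := hlog
    _ ≤ 0 := hlog2
  have hexpand : ∑ i, α i * ((fβ i - fα i) / 2)
      = (1/2) * ((∑ i, fβ i * α i) - ∑ i, α i * fα i) := by
    rw [mul_sub, Finset.mul_sum, Finset.mul_sum, ← Finset.sum_sub_distrib]
    exact Finset.sum_congr rfl fun i _ => by ring
  rw [hexpand] at hkey
  linarith

/-- Pointwise identity (A): the Fenchel-Young loss of the Sinkhorn potential equals the
Bregman divergence. -/
lemma FY_grad_eq (hCsym : C.IsSymm) (hCdiag : ∀ i, C i i = 0) (hK : (kernelK C).PosDef)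
    (hα : α ∈ simplexS d) (hβ : β ∈ simplexS d) :
    FYloss C α (gradOmega C β) = DOmega C α β := by
  unfold FYloss
  have hpβ : IsSinkhornPotential C β (gradOmega C β) := gradOmega_spec hCsym hCdiag hβ
  rw [pot_OmegaStar hCsym hK hβ hpβ, DOmega_eq hCsym hCdiag hα hβ]
  have : ∑ i, α i * gradOmega C β i = ∑ i, gradOmega C β i * α i :=
    Finset.sum_congr rfl fun i _ => mul_comm _ _
  rw [this]
  ring

/-- Pointwise inequality (B): the Bregman divergence at the geometric softmax is dominated
by the Fenchel-Young loss. -/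
lemma DOmega_gsoftmax_le (hd : 1 ≤ d) (hCsym : C.IsSymm) (hCdiag : ∀ i, C i i = 0)
    (hK : (kernelK C).PosDef) (hα : α ∈ simplexS d) (f : Fin d → ℝ) :
    DOmega C α (gsoftmax C f) ≤ FYloss C α f := by
  obtain ⟨hmem, _⟩ := gsoftmax_spec (C := C) hd f
  have hm0 : 0 < Phi C (gsoftmax C f) f := gsoftmax_pos hd hK f
  rw [DOmega_eq hCsym hCdiag hα hmem]
  unfold FYloss
  rw [OmegaStar_eq hd f]
  have hb : ∀ i, f i - gradOmega C (gsoftmax C f) i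
      ≤ -Real.log (Phi C (gsoftmax C f) f) :=
    gsoftmax_pot_bound hd hCsym hCdiag hK f
  have hsum : ∑ i, α i * (f i - gradOmega C (gsoftmax C f) i)
      ≤ -Real.log (Phi C (gsoftmax C f) f) := by
    calc ∑ i, α i * (f i - gradOmega C (gsoftmax C f) i)
        ≤ ∑ i, α i * (-Real.log (Phi C (gsoftmax C f) f)) :=
          Finset.sum_le_sum fun i _ => mul_le_mul_of_nonneg_left (hb i) (hα.1 i)
    _ = -Real.log (Phi C (gsoftmax C f) f) := by
          rw [← Finset.sum_mul, simplex_sum hα, one_mul]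
  have hexpand : ∑ i, α i * (f i - gradOmega C (gsoftmax C f) i)
      = (∑ i, α i * f i) - ∑ i, gradOmega C (gsoftmax C f) i * α i := by
    rw [← Finset.sum_sub_distrib]
    exact Finset.sum_congr rfl fun i _ => by ring
  rw [hexpand] at hsum
  linarith

end Pointwise


section Measurability

lemma Phi_cont2 (β : Fin d → ℝ) : Continuous (fun p : (Fin d → ℝ) × (Fin d → ℝ) =>
    Phi C β p.1) := by
  unfold Phi
  refine continuous_finset_sum _ fun i _ => continuous_finset_sum _ fun j _ => ?_
  refine continuous_const.mul ?_
  refine Continuous.rexp ?_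
  refine Continuous.div_const ?_ 2
  refine Continuous.neg ?_
  exact (((continuous_apply i).comp continuous_fst).add
    ((continuous_apply j).comp continuous_fst)).add continuous_const

lemma Phi_cont3 : Continuous (fun p : (Fin d → ℝ) × (Fin d → ℝ) => Phi C p.2 p.1) := by
  unfold Phi
  refine continuous_finset_sum _ fun i _ => continuous_finset_sum _ fun j _ => ?_
  refine Continuous.mul ?_ ?_
  · exact ((continuous_apply i).comp continuous_snd).mul
      ((continuous_apply j).comp continuous_snd)
  · refine Continuous.rexp ?_
    refine Continuous.div_const ?_ 2
    refine Continuous.neg ?_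
    exact (((continuous_apply i).comp continuous_fst).add
      ((continuous_apply j).comp continuous_fst)).add continuous_const

lemma meas_gsoftmax (hd : 1 ≤ d) (hCsym : C.IsSymm) (hK : (kernelK C).PosDef) :
    Measurable (gsoftmax C) := by
  set G : Set ((Fin d → ℝ) × (Fin d → ℝ)) :=
    {p | p.2 ∈ simplexS d ∧ ∀ β ∈ simplexS d, Phi C p.2 p.1 ≤ Phi C β p.1} with hG
  have hGclosed : IsClosed G := by
    have h1 : IsClosed {p : (Fin d → ℝ) × (Fin d → ℝ) | p.2 ∈ simplexS d} :=
      (isClosed_stdSimplex ℝ (Fin d)).preimage continuous_snd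
    have h2 : IsClosed {p : (Fin d → ℝ) × (Fin d → ℝ) |
        ∀ β ∈ simplexS d, Phi C p.2 p.1 ≤ Phi C β p.1} := by
      have : {p : (Fin d → ℝ) × (Fin d → ℝ) | ∀ β ∈ simplexS d, Phi C p.2 p.1 ≤ Phi C β p.1}
          = ⋂ β ∈ simplexS d, {p | Phi C p.2 p.1 ≤ Phi C β p.1} := by
        ext p; simp
      rw [this]
      exact isClosed_biInter fun β _ => isClosed_le Phi_cont3 (Phi_cont2 β)
    have : G = {p : (Fin d → ℝ) × (Fin d → ℝ) | p.2 ∈ simplexS d}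
        ∩ {p | ∀ β ∈ simplexS d, Phi C p.2 p.1 ≤ Phi C β p.1} := by
      ext p; simp [hG, Set.mem_setOf_eq, Set.mem_inter_iff]
    rw [this]
    exact h1.inter h2
  have hchar : ∀ p : (Fin d → ℝ) × (Fin d → ℝ), p ∈ G ↔ p.2 = gsoftmax C p.1 := by
    intro p
    constructor
    · rintro ⟨hmem, hmin⟩
      exact gsoftmax_unique hd hCsym hK hmem (isMinOn_iff.2 hmin)
    · intro h
      obtain ⟨hmem, hmin⟩ := gsoftmax_spec (C := C) hd p.1
      rw [hG]
      exact ⟨by rw [h]; exact hmem, by rw [h]; exact fun β hβ => isMinOn_iff.1 hmin β hβ⟩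
  intro B hB
  have him : gsoftmax C ⁻¹' B = Prod.fst '' (G ∩ (Set.univ ×ˢ B)) := by
    ext x
    constructor
    · intro hx
      exact ⟨(x, gsoftmax C x), ⟨(hchar (x, gsoftmax C x)).2 rfl,
        Set.mem_prod.2 ⟨Set.mem_univ _, hx⟩⟩, rfl⟩
    · rintro ⟨p, ⟨hpG, hpB⟩, rfl⟩
      have := (hchar p).1 hpG
      have hB2 := (Set.mem_prod.1 hpB).2
      rw [this] at hB2
      exact hB2
  rw [him]
  have hGm : MeasurableSet (G ∩ (Set.univ ×ˢ B)) :=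
    hGclosed.measurableSet.inter (MeasurableSet.univ.prod hB)
  refine hGm.image_of_continuousOn_injOn continuous_fst.continuousOn ?_
  intro p hp q hq hpq
  have h1 := (hchar p).1 hp.1
  have h2 := (hchar q).1 hq.1
  exact Prod.ext hpq (by rw [h1, h2, hpq])

lemma meas_gradOmega_comp (hCsym : C.IsSymm) (hCdiag : ∀ i, C i i = 0)
    {X : Type*} [MeasurableSpace X] {β : X → Fin d → ℝ}
    (hβmeas : Measurable β) (hβs : ∀ x, β x ∈ simplexS d) :
    Measurable (fun x => gradOmega C (β x)) := by
  set G : Set ((Fin d → ℝ) × (Fin d → ℝ)) :=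
    {p | p.1 ∈ simplexS d ∧ ∀ i, Real.exp (p.2 i / 2)
      = ∑ j, p.1 j * Real.exp (-(p.2 j + C i j) / 2)} with hG
  have hGclosed : IsClosed G := by
    have h1 : IsClosed {p : (Fin d → ℝ) × (Fin d → ℝ) | p.1 ∈ simplexS d} :=
      (isClosed_stdSimplex ℝ (Fin d)).preimage continuous_fst
    have h2 : IsClosed {p : (Fin d → ℝ) × (Fin d → ℝ) | ∀ i, Real.exp (p.2 i / 2)
        = ∑ j, p.1 j * Real.exp (-(p.2 j + C i j) / 2)} := by
      have : {p : (Fin d → ℝ) × (Fin d → ℝ) | ∀ i, Real.exp (p.2 i / 2)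
          = ∑ j, p.1 j * Real.exp (-(p.2 j + C i j) / 2)}
          = ⋂ i, {p : (Fin d → ℝ) × (Fin d → ℝ) | Real.exp (p.2 i / 2)
            = ∑ j, p.1 j * Real.exp (-(p.2 j + C i j) / 2)} := by
        ext p; simp
      rw [this]
      refine isClosed_iInter fun i => isClosed_eq ?_ ?_
      · exact Continuous.rexp (((continuous_apply i).comp continuous_snd).div_const 2)
      · refine continuous_finset_sum _ fun j _ => ?_
        refine Continuous.mul ((continuous_apply j).comp continuous_fst) ?_
        refine Continuous.rexp ?_
        refine Continuous.div_const ?_ 2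
        exact (((continuous_apply j).comp continuous_snd).add continuous_const).neg
    have : G = {p : (Fin d → ℝ) × (Fin d → ℝ) | p.1 ∈ simplexS d}
        ∩ {p | ∀ i, Real.exp (p.2 i / 2) = ∑ j, p.1 j * Real.exp (-(p.2 j + C i j) / 2)} := by
      ext p; simp [hG, Set.mem_setOf_eq, Set.mem_inter_iff]
    rw [this]
    exact h1.inter h2
  have hchar : ∀ p : (Fin d → ℝ) × (Fin d → ℝ),
      p ∈ G ↔ p.1 ∈ simplexS d ∧ p.2 = gradOmega C p.1 := by
    intro p
    constructor
    · rintro ⟨hmem, heq⟩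
      refine ⟨hmem, ?_⟩
      exact gradOmega_unique hCsym hCdiag hmem ((pot_iff hmem).2 heq)
    · rintro ⟨hmem, heq⟩
      refine ⟨hmem, ?_⟩
      rw [heq]
      exact (pot_iff hmem).1 (gradOmega_spec hCsym hCdiag hmem)
  intro B hB
  have him : (fun x => gradOmega C (β x)) ⁻¹' B
      = β ⁻¹' (Prod.fst '' (G ∩ (Set.univ ×ˢ B))) := by
    ext x
    constructor
    · intro hx
      exact ⟨(β x, gradOmega C (β x)),
        ⟨(hchar _).2 ⟨hβs x, rfl⟩, Set.mem_prod.2 ⟨Set.mem_univ _, hx⟩⟩, rfl⟩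
    · rintro ⟨p, ⟨hpG, hpB⟩, hfst⟩
      obtain ⟨_, heq⟩ := (hchar p).1 hpG
      have hB2 := (Set.mem_prod.1 hpB).2
      rw [heq, hfst] at hB2
      exact hB2
  rw [him]
  refine hβmeas ?_
  have hGm : MeasurableSet (G ∩ (Set.univ ×ˢ B)) :=
    hGclosed.measurableSet.inter (MeasurableSet.univ.prod hB)
  refine hGm.image_of_continuousOn_injOn continuous_fst.continuousOn ?_
  intro p hp q hq hpq
  obtain ⟨hp1, hp2⟩ := (hchar p).1 hp.1
  obtain ⟨hq1, hq2⟩ := (hchar q).1 hq.1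
  exact Prod.ext hpq (by rw [hp2, hq2, hpq])

end Measurability

end Calib
/-- Calibration of the geometric logistic loss: with risks
`ℛ(g) = ∫ ℓ_Ω(α, g(x)) dρ` and `ℰ(β) = ∫ D_Ω(α, β(x)) dρ` (assumed to exist, i.e. the
integrands are integrable), (i) `ℛ(∇Ω ∘ β) = ℰ(β)` for measurable simplex-valued `β`;
(ii) `ℰ(g-softmax ∘ g) ≤ ℛ(g)` for measurable `g`; consequently the Bayes risks coincide
and the excess Hausdorff risk is controlled by the excess Fenchel-Young risk. -/
theorem g_logistic_loss_calibration (d : ℕ) (hd : 1 ≤ d)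
    (C : Matrix (Fin d) (Fin d) ℝ) (hCsym : C.IsSymm) (hCdiag : ∀ i, C i i = 0)
    (hK : (kernelK C).PosDef)
    (X : Type*) [MeasurableSpace X]
    (ρ : Measure (X × (Fin d → ℝ))) [IsProbabilityMeasure ρ]
    (hρ : ∀ᵐ q ∂ρ, q.2 ∈ simplexS d)
    (hIntR : ∀ g : X → Fin d → ℝ, Measurable g →
      Integrable (fun q : X × (Fin d → ℝ) => FYloss C q.2 (g q.1)) ρ)
    (hIntE : ∀ β : X → Fin d → ℝ, Measurable β → (∀ x, β x ∈ simplexS d) →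
      Integrable (fun q : X × (Fin d → ℝ) => DOmega C q.2 (β q.1)) ρ) :
    (∀ β : X → Fin d → ℝ, Measurable β → (∀ x, β x ∈ simplexS d) →
      ∫ q, FYloss C q.2 (gradOmega C (β q.1)) ∂ρ = ∫ q, DOmega C q.2 (β q.1) ∂ρ) ∧
    (∀ g : X → Fin d → ℝ, Measurable g →
      ∫ q, DOmega C q.2 (gsoftmax C (g q.1)) ∂ρ ≤ ∫ q, FYloss C q.2 (g q.1) ∂ρ) ∧
    sInf {r : ℝ | ∃ β : X → Fin d → ℝ, Measurable β ∧ (∀ x, β x ∈ simplexS d) ∧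
        r = ∫ q, DOmega C q.2 (β q.1) ∂ρ}
      = sInf {r : ℝ | ∃ g : X → Fin d → ℝ, Measurable g ∧
        r = ∫ q, FYloss C q.2 (g q.1) ∂ρ} ∧
    ∀ g : X → Fin d → ℝ, Measurable g →
      (∫ q, DOmega C q.2 (gsoftmax C (g q.1)) ∂ρ) -
        sInf {r : ℝ | ∃ β : X → Fin d → ℝ, Measurable β ∧ (∀ x, β x ∈ simplexS d) ∧
          r = ∫ q, DOmega C q.2 (β q.1) ∂ρ}
      ≤ (∫ q, FYloss C q.2 (g q.1) ∂ρ) -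
        sInf {r : ℝ | ∃ g' : X → Fin d → ℝ, Measurable g' ∧
          r = ∫ q, FYloss C q.2 (g' q.1) ∂ρ} := by
  classical
  have hpartA : ∀ β : X → Fin d → ℝ, Measurable β → (∀ x, β x ∈ simplexS d) →
      ∫ q, FYloss C q.2 (gradOmega C (β q.1)) ∂ρ = ∫ q, DOmega C q.2 (β q.1) ∂ρ := by
    intro β hβm hβs
    refine integral_congr_ae ?_
    filter_upwards [hρ] with q hq
    exact Calib.FY_grad_eq hCsym hCdiag hK hq (hβs q.1)
  have hpartB : ∀ g : X → Fin d → ℝ, Measurable g →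
      ∫ q, DOmega C q.2 (gsoftmax C (g q.1)) ∂ρ ≤ ∫ q, FYloss C q.2 (g q.1) ∂ρ := by
    intro g hg
    have hint1 : Integrable (fun q : X × (Fin d → ℝ) =>
        DOmega C q.2 (gsoftmax C (g q.1))) ρ :=
      hIntE (fun x => gsoftmax C (g x)) ((Calib.meas_gsoftmax hd hCsym hK).comp hg)
        (fun x => (Calib.gsoftmax_spec hd (g x)).1)
    refine integral_mono_ae hint1 (hIntR g hg) ?_
    filter_upwards [hρ] with q hq
    exact Calib.DOmega_gsoftmax_le hd hCsym hCdiag hK hq (g q.1)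
  have hEne : {r : ℝ | ∃ β : X → Fin d → ℝ, Measurable β ∧ (∀ x, β x ∈ simplexS d) ∧
      r = ∫ q, DOmega C q.2 (β q.1) ∂ρ}.Nonempty := by
    have hsmem : (fun _ : Fin d => (d : ℝ)⁻¹) ∈ simplexS d := by
      refine ⟨fun i => by positivity, ?_⟩
      rw [Finset.sum_const, Finset.card_univ, Fintype.card_fin, nsmul_eq_mul]
      have hd0 : (d : ℝ) ≠ 0 := by
        have : (0:ℝ) < d := by exact_mod_cast hd
        linarith
      field_simp
    exact ⟨_, fun _ => fun _ => (d : ℝ)⁻¹, measurable_const, fun _ => hsmem, rfl⟩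
  have hRne : {r : ℝ | ∃ g : X → Fin d → ℝ, Measurable g ∧
      r = ∫ q, FYloss C q.2 (g q.1) ∂ρ}.Nonempty :=
    ⟨_, fun _ => (0 : Fin d → ℝ), measurable_const, rfl⟩
  have hE0 : ∀ r ∈ {r : ℝ | ∃ β : X → Fin d → ℝ, Measurable β ∧ (∀ x, β x ∈ simplexS d) ∧
      r = ∫ q, DOmega C q.2 (β q.1) ∂ρ}, 0 ≤ r := by
    rintro r ⟨β, hβm, hβs, rfl⟩
    refine integral_nonneg_of_ae ?_
    filter_upwards [hρ] with q hq
    exact Calib.DOmega_nonneg' hd hCsym hCdiag hK hq (hβs q.1)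
  have hR0 : ∀ r ∈ {r : ℝ | ∃ g : X → Fin d → ℝ, Measurable g ∧
      r = ∫ q, FYloss C q.2 (g q.1) ∂ρ}, 0 ≤ r := by
    rintro r ⟨g, hg, rfl⟩
    refine integral_nonneg_of_ae ?_
    filter_upwards [hρ] with q hq
    exact le_trans
      (Calib.DOmega_nonneg' hd hCsym hCdiag hK hq (Calib.gsoftmax_spec hd (g q.1)).1)
      (Calib.DOmega_gsoftmax_le hd hCsym hCdiag hK hq (g q.1))
  have hEbdd : BddBelow {r : ℝ | ∃ β : X → Fin d → ℝ, Measurable β ∧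
      (∀ x, β x ∈ simplexS d) ∧ r = ∫ q, DOmega C q.2 (β q.1) ∂ρ} := ⟨0, hE0⟩
  have hRbdd : BddBelow {r : ℝ | ∃ g : X → Fin d → ℝ, Measurable g ∧
      r = ∫ q, FYloss C q.2 (g q.1) ∂ρ} := ⟨0, hR0⟩
  have hinf : sInf {r : ℝ | ∃ β : X → Fin d → ℝ, Measurable β ∧ (∀ x, β x ∈ simplexS d) ∧
        r = ∫ q, DOmega C q.2 (β q.1) ∂ρ}
      = sInf {r : ℝ | ∃ g : X → Fin d → ℝ, Measurable g ∧
        r = ∫ q, FYloss C q.2 (g q.1) ∂ρ} := by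
    refine le_antisymm ?_ ?_
    · refine le_csInf hRne ?_
      rintro r ⟨g, hg, rfl⟩
      refine le_trans (csInf_le hEbdd ?_) (hpartB g hg)
      exact ⟨fun x => gsoftmax C (g x), (Calib.meas_gsoftmax hd hCsym hK).comp hg,
        fun x => (Calib.gsoftmax_spec hd (g x)).1, rfl⟩
    · refine le_csInf hEne ?_
      rintro e ⟨β, hβm, hβs, rfl⟩
      refine le_trans (csInf_le hRbdd ?_) (le_of_eq (hpartA β hβm hβs))
      exact ⟨fun x => gradOmega C (β x),
        Calib.meas_gradOmega_comp hCsym hCdiag hβm hβs, rfl⟩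
  refine ⟨hpartA, hpartB, hinf, ?_⟩
  intro g hg
  rw [hinf]
  exact sub_le_sub_right (hpartB g hg) _
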